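/- arXiv:1212.1321 — 5 statements merged into one kernel-verified Lean document; each statement's English description precedes it below -/
import Mathlib

section
/- The Jacobson radical of a finite dimensional associative algebra over a field of characteristic 0 is invariant under every derivation of the algebra. -/
section Aux

variable {F A : Type*} [Field F] [CharZero F] [Ring A] [Algebra F A]

/-- Left-inverse characterization of membership in the Jacobson radical. -/
lemma jac_leftInv {a : A} (ha : a ∈ Ideal.jacobson (⊥ : Ideal A)) (y : A) :
    ∃ z : A, z * (y * a + 1) = 1 := by
  obtain ⟨z, hz⟩ := Ideal.mem_jacobson_iff.1 ha y
  rw [Ideal.mem_bot] at hz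
  refine ⟨z, ?_⟩
  have h1 : z * y * a + z = 1 := sub_eq_zero.mp hz
  rw [mul_add, mul_one, ← mul_assoc, h1]

/-- The algebraic trick: a left inverse of `1 + u*v` yields one of `1 + v*u`. -/
lemma leftInv_swap {u v z : A} (h : z * (u * v + 1) = 1) :
    (1 - v * z * u) * (v * u + 1) = 1 := by
  have h2 : z * ((u * v + 1) * u) = u := by rw [← mul_assoc, h, one_mul]
  have e : (1 - v * z * u) * (v * u + 1)
      = (v * u + 1) - v * (z * ((u * v + 1) * u)) := by noncomm_ring
  rw [e, h2]; noncomm_ring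

/-- The Jacobson radical of `⊥` is a two-sided ideal. -/
lemma jac_mul_right {a : A} (ha : a ∈ Ideal.jacobson (⊥ : Ideal A)) (r : A) :
    a * r ∈ Ideal.jacobson (⊥ : Ideal A) := by
  rw [Ideal.mem_jacobson_iff]
  intro y
  -- need a left inverse of `y * (a*r) + 1`
  obtain ⟨z₀, hz₀⟩ := jac_leftInv ha (r * y)   -- left inverse of (r*y)*a + 1
  -- swap once: left inverse of a*(r*y) + 1
  have h1 : (1 - a * z₀ * (r * y)) * (a * (r * y) + 1) = 1 := leftInv_swap hz₀
  -- swap again with u := a*r, v := y : left inverse of y*(a*r)+1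
  have h2 : (1 - y * (1 - a * z₀ * (r * y)) * (a * r)) * (y * (a * r) + 1) = 1 := by
    refine leftInv_swap (u := a * r) (v := y) ?_
    calc (1 - a * z₀ * (r * y)) * (a * r * y + 1)
        = (1 - a * z₀ * (r * y)) * (a * (r * y) + 1) := by noncomm_ring
      _ = 1 := h1
  refine ⟨1 - y * (1 - a * z₀ * (r * y)) * (a * r), ?_⟩
  rw [Ideal.mem_bot, sub_eq_zero]
  calc (1 - y * (1 - a * z₀ * (r * y)) * (a * r)) * y * (a * r)
        + (1 - y * (1 - a * z₀ * (r * y)) * (a * r))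
      = (1 - y * (1 - a * z₀ * (r * y)) * (a * r)) * (y * (a * r) + 1) := by noncomm_ring
    _ = 1 := h2

/-- Leibniz formula for iterates of a derivation. -/
lemma leibniz_pow (D : A →ₗ[F] A) (hD : ∀ a b : A, D (a * b) = D a * b + a * D b)
    (k : ℕ) (a b : A) :
    (D ^ k) (a * b) = ∑ i ∈ Finset.range (k + 1),
      k.choose i • ((D ^ i) a * (D ^ (k - i)) b) := by
  have hpow : ∀ (m : ℕ) (x : A), (D ^ (m + 1)) x = D ((D ^ m) x) := by
    intro m x
    rw [pow_succ']
    rfl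
  induction k with
  | zero => simp
  | succ k ih =>
    rw [hpow, ih, map_sum]
    have step : ∀ i ∈ Finset.range (k + 1),
        D (k.choose i • ((D ^ i) a * (D ^ (k - i)) b))
          = k.choose i • ((D ^ (i + 1)) a * (D ^ (k - i)) b)
            + k.choose i • ((D ^ i) a * (D ^ (k - i + 1)) b) := by
      intro i _
      rw [map_nsmul, hD, smul_add, hpow, hpow]
    rw [Finset.sum_congr rfl step, Finset.sum_add_distrib]
    conv_rhs => rw [Finset.sum_range_succ']
    -- RHS = ∑_{i<k+1} (k+1).choose (i+1) • (D^{i+1} a * D^{k-i} b) + (a * D^{k+1} b)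
    have hrhs : ∀ i ∈ Finset.range (k + 1),
        (k + 1).choose (i + 1) • ((D ^ (i + 1)) a * (D ^ (k + 1 - (i + 1))) b)
          = k.choose i • ((D ^ (i + 1)) a * (D ^ (k - i)) b)
            + k.choose (i + 1) • ((D ^ (i + 1)) a * (D ^ (k - i)) b) := by
      intro i _
      rw [Nat.choose_succ_succ, Nat.succ_sub_succ, add_nsmul]
    rw [Finset.sum_congr rfl hrhs, Finset.sum_add_distrib]
    -- second sums match after peeling
    have hsecond : ∑ i ∈ Finset.range (k + 1), k.choose i • ((D ^ i) a * (D ^ (k - i + 1)) b)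
        = ∑ i ∈ Finset.range (k + 1), k.choose (i + 1) • ((D ^ (i + 1)) a * (D ^ (k - i)) b)
          + (k + 1).choose 0 • ((D ^ 0) a * (D ^ (k + 1 - 0)) b) := by
      rw [Finset.sum_range_succ', Finset.sum_range_succ]
      simp only [Nat.choose_succ_self, zero_smul, add_zero, Nat.choose_zero_right,
        pow_zero, Nat.sub_zero, one_smul, Module.End.one_apply]
      congr 1
      apply Finset.sum_congr rfl
      intro i hi
      rw [Finset.mem_range] at hi
      have h' : k - (i + 1) + 1 = k - i := by omega
      rw [h']
    rw [hsecond]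
    abel

end Aux

section Aux2

set_option linter.unusedSectionVars false

variable {F A : Type*} [Field F] [CharZero F] [Ring A] [Algebra F A]
variable (D : A →ₗ[F] A) (hD : ∀ a b : A, D (a * b) = D a * b + a * D b)

local notation "J" => Ideal.jacobson (⊥ : Ideal A)

include hD in
/-- Low iterates of `D` on a product of many radical elements stay in the radical. -/
lemma jpow_low : ∀ (t : List A) (j : ℕ), (∀ b ∈ t, b ∈ J) → j < t.length →
    (D ^ j) t.prod ∈ J := by
  intro t
  induction t with
  | nil => intro j _ hj; simp at hj
  | cons b t ih =>
    intro j hmem hj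
    have hb : b ∈ J := hmem b List.mem_cons_self
    have hmem' : ∀ x ∈ t, x ∈ J := fun x hx => hmem x (List.mem_cons_of_mem b hx)
    match j with
    | 0 =>
      simpa [List.prod_cons] using jac_mul_right hb t.prod
    | (j + 1) =>
      rw [List.prod_cons, leibniz_pow D hD, Finset.sum_range_succ']
      refine add_mem (Submodule.sum_mem _ ?_) ?_
      · intro i hi
        rw [Finset.mem_range] at hi
        refine nsmul_mem (Ideal.mul_mem_left _ _ (ih (j + 1 - (i + 1)) hmem' ?_)) _
        simp only [List.length_cons] at hj
        omega
      · simpa using jac_mul_right hb ((D ^ (j + 1)) t.prod)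

include hD in
/-- Key Leibniz estimate: `k! • D(a₁)⋯D(aₖ) ≡ Dᵏ(a₁⋯aₖ) mod J`. -/
lemma fact_smul_mem : ∀ (l : List A), (∀ b ∈ l, b ∈ J) →
    (Nat.factorial l.length) • ((l.map D).prod) - (D ^ l.length) l.prod ∈ J := by
  intro l
  induction l with
  | nil => simp
  | cons b t ih =>
    intro hmem
    have hb : b ∈ J := hmem b List.mem_cons_self
    have hmem' : ∀ x ∈ t, x ∈ J := fun x hx => hmem x (List.mem_cons_of_mem b hx)
    set k := t.length with hk
    set P := (t.map D).prod with hP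
    set q := t.prod with hq
    have hlen : (b :: t).length = k + 1 := by simp [hk]
    rw [List.map_cons, List.prod_cons, List.prod_cons, hlen,
      leibniz_pow D hD, Finset.sum_range_succ', Finset.sum_range_succ']
    -- now the iterate is  (∑ i in range k, f (i+2)) + f 1 + f 0
    have e1 : (Nat.factorial (k + 1)) • (D b * P)
        = (k + 1) • (D b * ((Nat.factorial k) • P)) := by
      rw [Nat.factorial_succ, mul_smul, mul_smul_comm]
    have e2 : (k + 1).choose (0 + 1) • ((D ^ (0 + 1)) b * (D ^ (k + 1 - (0 + 1))) q)
        = (k + 1) • (D b * (D ^ k) q) := by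
      norm_num
    have key : (Nat.factorial (k + 1)) • (D b * P) -
        ((∑ i ∈ Finset.range k,
            (k + 1).choose (i + 1 + 1) • ((D ^ (i + 1 + 1)) b * (D ^ (k + 1 - (i + 1 + 1))) q)
          + (k + 1).choose (0 + 1) • ((D ^ (0 + 1)) b * (D ^ (k + 1 - (0 + 1))) q))
          + (k + 1).choose 0 • ((D ^ 0) b * (D ^ (k + 1 - 0)) q))
        = (k + 1) • (D b * ((Nat.factorial k) • P - (D ^ k) q))
          - (∑ i ∈ Finset.range k,
              (k + 1).choose (i + 1 + 1) • ((D ^ (i + 1 + 1)) b * (D ^ (k + 1 - (i + 1 + 1))) q))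
          - (k + 1).choose 0 • ((D ^ 0) b * (D ^ (k + 1 - 0)) q) := by
      rw [e1, e2, mul_sub, smul_sub]
      abel
    rw [key]
    refine sub_mem (sub_mem (nsmul_mem (Ideal.mul_mem_left _ _ (ih hmem')) _)
      (Submodule.sum_mem _ ?_)) ?_
    · intro i hi
      rw [Finset.mem_range] at hi
      refine nsmul_mem (Ideal.mul_mem_left _ _ (jpow_low D hD t (k + 1 - (i + 1 + 1)) hmem' ?_)) _
      omega
    · simpa using jac_mul_right hb ((D ^ (k + 1)) q)

omit [CharZero F] in
/-- Noncommutative Nakayama for finitely generated left ideals. -/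
lemma nakayama (s : Finset A) :
    Submodule.span A (s : Set A) ≤ Submodule.span A
      {x | ∃ c ∈ J, ∃ y ∈ Submodule.span A (s : Set A), x = c * y} →
    Submodule.span A (s : Set A) = ⊥ := by
  classical
  induction s using Finset.induction_on with
  | empty => intro _; simp
  | @insert a s hans ih =>
    intro h
    rw [Finset.coe_insert] at h ⊢
    have hstar : Submodule.span A {x | ∃ c ∈ J, ∃ y ∈ Submodule.span A (insert a (s : Set A)),
          x = c * y}
        ≤ Submodule.map (LinearMap.toSpanSingleton A A a) (Ideal.jacobson (⊥ : Ideal A))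
          ⊔ Submodule.span A (s : Set A) := by
      rw [Submodule.span_le]
      rintro x ⟨c, hc, y, hy, rfl⟩
      rw [Submodule.span_insert] at hy
      obtain ⟨p, hp, q, hq, rfl⟩ := Submodule.mem_sup.1 hy
      obtain ⟨r, rfl⟩ := Submodule.mem_span_singleton.1 hp
      have e : c * (r • a + q) = (c * r) * a + c * q := by
        rw [mul_add, smul_eq_mul, ← mul_assoc]
      rw [e]
      refine add_mem (Submodule.mem_sup_left ⟨c * r, jac_mul_right hc r, ?_⟩)
        (Submodule.mem_sup_right ?_)
      · simp [LinearMap.toSpanSingleton_apply, smul_eq_mul]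
      · simpa [smul_eq_mul] using Submodule.smul_mem _ c hq
    have haJ := h (Submodule.subset_span (Set.mem_insert a _))
    obtain ⟨p, hp, w, hw, hpw⟩ := Submodule.mem_sup.1 (hstar haJ)
    obtain ⟨c, hc, rfl⟩ := hp
    obtain ⟨z, hz⟩ := jac_leftInv hc (-1)
    have haw : a ∈ Submodule.span A (s : Set A) := by
      have ha' : a = c * a + w := by
        simpa [LinearMap.toSpanSingleton_apply, smul_eq_mul] using hpw.symm
      have h1 : (1 - c) * a = w := by
        rw [sub_mul, one_mul]
        nth_rewrite 1 [ha']
        abel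
      have h2 : z * (1 - c) = 1 := by
        have e : (-1 : A) * c + 1 = 1 - c := by noncomm_ring
        rwa [e] at hz
      have : a = z • w := by
        calc a = (z * (1 - c)) * a := by rw [h2, one_mul]
          _ = z * ((1 - c) * a) := by rw [mul_assoc]
          _ = z • w := by rw [h1, smul_eq_mul]
      rw [this]
      exact Submodule.smul_mem _ z hw
    rw [Submodule.span_insert_eq_span haw] at h ⊢
    exact ih h

include hD in
/-- Products of `n` elements of `D(J) + J` lie in `J`, provided products of `n`
elements of `J` vanish. -/
lemma prod_S_mem (n : ℕ)
    (hzero : ∀ l : List A, (∀ b ∈ l, b ∈ J) → l.length = n → l.prod = 0) :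
    ∀ l : List A, (∀ x ∈ l, ∃ b ∈ J, ∃ c ∈ J, x = D b + c) → l.length = n →
      l.prod ∈ J := by
  set E : ℕ → Submodule F A := fun k => Submodule.span F
    {x | ∃ t : List A, (∀ b ∈ t, b ∈ J) ∧ t.length = k ∧ x = (t.map D).prod} with hE
  have hrun : ∀ t : List A, (∀ b ∈ t, b ∈ J) → t.length = n → (t.map D).prod ∈ J := by
    intro t ht hlen
    have h1 := fact_smul_mem D hD t ht
    rw [hlen, hzero t ht hlen, map_zero, sub_zero] at h1
    have h2 : ((n.factorial : F)) • (t.map D).prod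
        ∈ (Ideal.jacobson (⊥ : Ideal A)).restrictScalars F := by
      rw [Nat.cast_smul_eq_nsmul]; exact h1
    have h3 := Submodule.smul_mem ((Ideal.jacobson (⊥ : Ideal A)).restrictScalars F)
      ((n.factorial : F))⁻¹ h2
    rwa [smul_smul, inv_mul_cancel₀ (by exact_mod_cast n.factorial_ne_zero), one_smul] at h3
  have hstep : ∀ l : List A, (∀ x ∈ l, ∃ b ∈ J, ∃ c ∈ J, x = D b + c) →
      l.prod ∈ E l.length ⊔ (Ideal.jacobson (⊥ : Ideal A)).restrictScalars F := by
    intro l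
    induction l with
    | nil =>
      intro _
      exact Submodule.mem_sup_left (Submodule.subset_span ⟨[], by simp, by simp, by simp⟩)
    | cons x t ih =>
      intro hmem
      obtain ⟨b, hb, c, hc, hx⟩ := hmem x List.mem_cons_self
      have hmem' := fun y hy => hmem y (List.mem_cons_of_mem x hy)
      obtain ⟨u, hu, j, hj, huj⟩ := Submodule.mem_sup.1 (ih hmem')
      have hmul : ∀ v ∈ E t.length, D b * v ∈ E (t.length + 1) := by
        intro v hv
        induction hv using Submodule.span_induction with
        | mem w hw =>
          obtain ⟨t', ht', hlen', rfl⟩ := hw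
          refine Submodule.subset_span ⟨b :: t', ?_, by simp [hlen'], by simp⟩
          intro y hy
          rcases List.mem_cons.1 hy with h' | h'
          · rw [h']; exact hb
          · exact ht' y h'
        | zero => rw [mul_zero]; exact zero_mem _
        | add w₁ w₂ _ _ hw₁ hw₂ => rw [mul_add]; exact add_mem hw₁ hw₂
        | smul r w _ hw => rw [mul_smul_comm]; exact Submodule.smul_mem _ r hw
      rw [List.prod_cons, hx, ← huj]
      have e : (D b + c) * (u + j) = D b * u + (D b * j + c * (u + j)) := by noncomm_ring
      rw [e]
      refine add_mem (Submodule.mem_sup_left ?_) (Submodule.mem_sup_right ?_)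
      · simpa using hmul u hu
      · exact add_mem (Ideal.mul_mem_left _ _ hj) (jac_mul_right hc (u + j))
  intro l hl hlen
  have hfin := hstep l hl
  rw [hlen] at hfin
  have hE_le : E n ≤ (Ideal.jacobson (⊥ : Ideal A)).restrictScalars F := by
    rw [hE, Submodule.span_le]
    rintro x ⟨t, ht, hlen', rfl⟩
    exact hrun t ht hlen'
  exact (sup_le hE_le le_rfl) hfin

end Aux2

/-- the Jacobson radical of a finite dimensional associative
algebra over a field of characteristic `0` is invariant under every
derivation. -/
theorem stmt1 {F A : Type*} [Field F] [CharZero F] [Ring A] [Algebra F A]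
    [FiniteDimensional F A]
    (D : A →ₗ[F] A) (hD : ∀ a b : A, D (a * b) = D a * b + a * D b) :
    ∀ a ∈ Ideal.jacobson (⊥ : Ideal A), D a ∈ Ideal.jacobson (⊥ : Ideal A) := by
  classical
  have hart : IsArtinian A A := isArtinian_of_tower F inferInstance
  have hnoe : IsNoetherian A A := isNoetherian_of_tower F inferInstance
  set Q : ℕ → Ideal A := fun k => Submodule.span A
    {x | ∃ l : List A, (∀ b ∈ l, b ∈ Ideal.jacobson (⊥ : Ideal A)) ∧ l.length = k ∧ x = l.prod}
    with hQdef
  have hQanti : ∀ k, Q (k + 1) ≤ Q k := by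
    intro k
    rw [hQdef, Submodule.span_le]
    rintro x ⟨l, hl, hlen, rfl⟩
    match l, hlen with
    | (b :: t), hlen =>
      rw [List.prod_cons]
      have ht : t.prod ∈ Q k := Submodule.subset_span
        ⟨t, fun y hy => hl y (List.mem_cons_of_mem b hy), by simpa using hlen, rfl⟩
      simpa [smul_eq_mul] using Submodule.smul_mem (Q k) b ht
  obtain ⟨n, hn⟩ := IsArtinian.monotone_stabilizes
    (⟨fun k => OrderDual.toDual (Q k),
      fun i j hij => (antitone_nat_of_succ_le hQanti hij : Q j ≤ Q i)⟩ : ℕ →o (Ideal A)ᵒᵈ)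
  have hstab : Q n = Q (n + 1) := hn (n + 1) (Nat.le_succ n)
  obtain ⟨s, hs⟩ := IsNoetherian.noetherian (Q n)
  have hbot : Q n = ⊥ := by
    rw [← hs]
    apply nakayama s
    rw [hs]
    conv_lhs => rw [hstab]
    rw [hQdef, Submodule.span_le]
    rintro x ⟨l, hl, hlen, rfl⟩
    match l, hlen with
    | (b :: t), hlen =>
      refine Submodule.subset_span ⟨b, hl b List.mem_cons_self, t.prod, ?_, List.prod_cons⟩
      exact Submodule.subset_span
        ⟨t, fun y hy => hl y (List.mem_cons_of_mem b hy), by simpa using hlen, rfl⟩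
  have hzero : ∀ l : List A, (∀ b ∈ l, b ∈ Ideal.jacobson (⊥ : Ideal A)) → l.length = n →
      l.prod = 0 := by
    intro l hl hlen
    have : l.prod ∈ Q n := Submodule.subset_span ⟨l, hl, hlen, rfl⟩
    rwa [hbot, Ideal.mem_bot] at this
  intro a ha
  rw [Ideal.mem_jacobson_iff]
  intro y
  have hyda : ∃ b ∈ Ideal.jacobson (⊥ : Ideal A), ∃ c ∈ Ideal.jacobson (⊥ : Ideal A),
      y * D a = D b + c := by
    refine ⟨y * a, Ideal.mul_mem_left _ y ha, -(D y * a),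
      neg_mem (Ideal.mul_mem_left _ (D y) ha), ?_⟩
    rw [hD y a]
    abel
  have hxJ : (y * D a) ^ n ∈ Ideal.jacobson (⊥ : Ideal A) := by
    have h := prod_S_mem D hD n hzero (List.replicate n (y * D a))
      (fun x hx => by rw [List.eq_of_mem_replicate hx]; exact hyda)
      List.length_replicate
    rwa [List.prod_replicate] at h
  have hnil : IsNilpotent (y * D a) := by
    refine ⟨n * n, ?_⟩
    rw [pow_mul]
    have h := hzero (List.replicate n ((y * D a) ^ n))
      (fun x hx => by rw [List.eq_of_mem_replicate hx]; exact hxJ)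
      List.length_replicate
    rwa [List.prod_replicate] at h
  obtain ⟨u, hu⟩ := hnil.isUnit_add_one
  refine ⟨(↑u⁻¹ : A), ?_⟩
  rw [Ideal.mem_bot, sub_eq_zero]
  calc (↑u⁻¹ : A) * y * D a + ↑u⁻¹
      = ↑u⁻¹ * (y * D a + 1) := by noncomm_ring
    _ = ↑u⁻¹ * ↑u := by rw [hu]
    _ = 1 := u.inv_mul
end

section
/- Let A be the algebra of matrices [[C,D],[0,0]] (C, D ∈ M_m(F)) and φ the automorphism of A sending [[C,D],[0,0]] to [[C, C+D],[0,0]]. Then there is no maximal semisimple subalgebra B of A with A = B ⊕ J(A) (as vector spaces) and φ(B) = B; i.e., A admits no φ-invariant Wedderburn–Malcev decomposition. -/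
open Matrix

/-- The (non-unital) algebra of `2m × 2m` matrices of block form
`[[C, D], [0, 0]]` with `C, D ∈ M_m(F)`. -/
def blockAlg (F : Type*) [Field F] (m : ℕ) :
    NonUnitalSubalgebra F (Matrix (Fin m ⊕ Fin m) (Fin m ⊕ Fin m) F) where
  carrier := {x | ∃ C D : Matrix (Fin m) (Fin m) F, x = Matrix.fromBlocks C D 0 0}
  add_mem' := by
    rintro x y ⟨C, D, rfl⟩ ⟨C', D', rfl⟩
    exact ⟨C + C', D + D', by simp [Matrix.fromBlocks_add]⟩
  zero_mem' := ⟨0, 0, by simp⟩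
  mul_mem' := by
    rintro x y ⟨C, D, rfl⟩ ⟨C', D', rfl⟩
    exact ⟨C * C', C * D', by simp [Matrix.fromBlocks_multiply]⟩
  smul_mem' := by
    rintro c x ⟨C, D, rfl⟩
    exact ⟨c • C, c • D, by simp [Matrix.fromBlocks_smul]⟩

/-- The Jacobson radical `J(A) = {[[0, D], [0, 0]]}` of `blockAlg F m`,
as a subspace. -/
def radJ (F : Type*) [Field F] (m : ℕ) : Submodule F ↥(blockAlg F m) where
  carrier := {x | ∃ D : Matrix (Fin m) (Fin m) F, x.val = Matrix.fromBlocks 0 D 0 0}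
  add_mem' := by
    rintro x y ⟨D, hD⟩ ⟨D', hD'⟩
    exact ⟨D + D', by
      show x.val + y.val = _
      rw [hD, hD']; simp [Matrix.fromBlocks_add]⟩
  zero_mem' := ⟨0, by simp⟩
  smul_mem' := by
    rintro c x ⟨D, hD⟩
    exact ⟨c • D, by
      show c • x.val = _
      rw [hD]; simp [Matrix.fromBlocks_smul]⟩

/-- The automorphism `φ([[C, D], [0, 0]]) = [[C, C + D], [0, 0]]` of
`blockAlg F m`. -/
def phiBlock (F : Type*) [Field F] (m : ℕ) (x : ↥(blockAlg F m)) : ↥(blockAlg F m) :=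
  ⟨x.val + x.val * Matrix.fromBlocks 0 1 0 0, by
    obtain ⟨C, D, hx⟩ := x.2
    exact ⟨C, D + C, by
      rw [hx]; simp [Matrix.fromBlocks_multiply, Matrix.fromBlocks_add]⟩⟩

/-- the algebra of block matrices `[[C, D], [0, 0]]` has no
`φ`-invariant Wedderburn–Malcev decomposition: there is no subalgebra `B`
with `A = B ⊕ J(A)` as vector spaces and `φ(B) ⊆ B`. -/
theorem stmt4 (F : Type*) [Field F] [CharZero F] (m : ℕ) (hm : 2 ≤ m) :
    ¬ ∃ B : NonUnitalSubalgebra F ↥(blockAlg F m),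
        B.toSubmodule ⊔ radJ F m = ⊤ ∧
        B.toSubmodule ⊓ radJ F m = ⊥ ∧
        (∀ b ∈ B, phiBlock F m b ∈ B) := by
  rintro ⟨B, hsup, hinf, hphi⟩
  -- Every element of B lies in J: its C-block is 0.
  have key : ∀ b ∈ B, b ∈ radJ F m := by
    intro b hb
    have hmem : phiBlock F m b - b ∈ B.toSubmodule ⊓ radJ F m := by
      constructor
      · exact sub_mem (hphi b hb) hb
      · obtain ⟨C, D, hx⟩ := b.2
        refine ⟨C, ?_⟩
        show (phiBlock F m b).val - b.val = _
        simp only [phiBlock, hx]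
        rw [Matrix.fromBlocks_multiply]
        simp
    rw [hinf, Submodule.mem_bot, sub_eq_zero] at hmem
    obtain ⟨C, D, hx⟩ := b.2
    have hval : (phiBlock F m b).val = b.val := congrArg Subtype.val hmem
    simp only [phiBlock, hx] at hval
    rw [Matrix.fromBlocks_multiply] at hval
    simp only [Matrix.mul_zero, Matrix.zero_mul, Matrix.mul_one, add_zero, zero_add] at hval
    have hC : C = 0 := by
      have := congrArg Matrix.toBlocks₁₂ hval
      simpa [Matrix.toBlocks_fromBlocks₁₂, Matrix.fromBlocks_add] using this
    exact ⟨D, by rw [hx, hC]⟩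
  -- Hence B ⊔ J = J, but the identity block is not in J.
  set a : ↥(blockAlg F m) := ⟨Matrix.fromBlocks 1 0 0 0, ⟨1, 0, rfl⟩⟩ with ha
  have haJ : a ∈ radJ F m := by
    have : a ∈ B.toSubmodule ⊔ radJ F m := hsup ▸ Submodule.mem_top
    obtain ⟨b, hb, j, hj, hbj⟩ := Submodule.mem_sup.mp this
    exact hbj ▸ add_mem (key b hb) hj
  obtain ⟨D, hD⟩ := haJ
  have h11 : (1 : Matrix (Fin m) (Fin m) F) = 0 := by
    have := congrArg Matrix.toBlocks₁₁ hD
    simpa [ha] using this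
  have : Nonempty (Fin m) := ⟨⟨0, by omega⟩⟩
  obtain ⟨i⟩ := this
  have := congrFun (congrFun h11 i) i
  simp [Matrix.one_apply] at this
end

section
/- Let A be the associative algebra of matrices [[C,D],[0,0]] (C,D ∈ M_m(F), m ≥ 2) viewed as a Lie algebra g under the commutator [x,y] = xy − yx, acting on A by the adjoint action ad(x)(a) = xa − ax (derivations of A). Then there is no maximal semisimple associative subalgebra B of A with A = B ⊕ J(A) such that B is invariant under all ad(x), x ∈ A; i.e., there is no g-invariant Wedderburn–Malcev decomposition. -/
open Matrix

/-- the algebra of block matrices `[[C, D], [0, 0]]` (with the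
adjoint action of itself, viewed as a Lie algebra, by derivations
`ad(x)(a) = xa − ax`) has no `𝔤`-invariant Wedderburn–Malcev decomposition:
there is no subalgebra `B` with `A = B ⊕ J(A)` as vector spaces and
`ad(x)(B) ⊆ B` for all `x ∈ A`. -/
theorem stmt7 (F : Type*) [Field F] [CharZero F] (m : ℕ) (hm : 2 ≤ m) :
    ¬ ∃ B : NonUnitalSubalgebra F ↥(blockAlg F m),
        B.toSubmodule ⊔ radJ F m = ⊤ ∧
        B.toSubmodule ⊓ radJ F m = ⊥ ∧
        (∀ x : ↥(blockAlg F m), ∀ b ∈ B, x * b - b * x ∈ B) := by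
  rintro ⟨B, hsup, hinf, hinv⟩
  have hm0 : 0 < m := by omega
  let i0 : Fin m := ⟨0, hm0⟩
  let x0 : ↥(blockAlg F m) := ⟨Matrix.fromBlocks 1 0 0 0, ⟨1, 0, rfl⟩⟩
  let j0 : ↥(blockAlg F m) := ⟨Matrix.fromBlocks 0 1 0 0, ⟨0, 1, rfl⟩⟩
  have hj0 : j0 ∈ radJ F m := ⟨1, rfl⟩
  have hx0 : x0 ∈ B.toSubmodule ⊔ radJ F m := by rw [hsup]; trivial
  obtain ⟨b, hb, j, hj, hbj⟩ := Submodule.mem_sup.mp hx0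
  obtain ⟨C, D, hbCD⟩ := b.2
  obtain ⟨E, hjE⟩ := hj
  have h1 : b * j0 - j0 * b ∈ B := by
    have h := B.neg_mem (hinv j0 b hb)
    rwa [neg_sub] at h
  have h2 : b * j0 - j0 * b ∈ radJ F m := by
    refine ⟨C, ?_⟩
    show b.val * j0.val - j0.val * b.val = _
    rw [hbCD]
    show Matrix.fromBlocks C D 0 0 * Matrix.fromBlocks 0 1 0 0
        - Matrix.fromBlocks 0 1 0 0 * Matrix.fromBlocks C D 0 0 = _
    simp [Matrix.fromBlocks_multiply]
  have hz : b * j0 - j0 * b = 0 := by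
    have hmem : b * j0 - j0 * b ∈ B.toSubmodule ⊓ radJ F m := ⟨h1, h2⟩
    rwa [hinf, Submodule.mem_bot] at hmem
  have hjj : j * j0 - j0 * j = 0 := by
    apply Subtype.ext
    show j.val * j0.val - j0.val * j.val = (0 : ↥(blockAlg F m)).val
    rw [hjE]
    show Matrix.fromBlocks 0 E 0 0 * Matrix.fromBlocks 0 1 0 0
        - Matrix.fromBlocks 0 1 0 0 * Matrix.fromBlocks 0 E 0 0 = _
    simp [Matrix.fromBlocks_multiply]
  have hfinal : x0 * j0 - j0 * x0 = 0 := by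
    have : x0 * j0 - j0 * x0 = (b * j0 - j0 * b) + (j * j0 - j0 * j) := by
      rw [← hbj]; noncomm_ring
    rw [this, hz, hjj, add_zero]
  have hval : (x0 * j0 - j0 * x0).val = Matrix.fromBlocks 0 1 0 0 := by
    show x0.val * j0.val - j0.val * x0.val = _
    show Matrix.fromBlocks 1 0 0 0 * Matrix.fromBlocks 0 1 0 0
        - Matrix.fromBlocks 0 1 0 0 * Matrix.fromBlocks 1 0 0 0 = _
    simp [Matrix.fromBlocks_multiply]
  rw [hfinal] at hval
  have h10 := congrFun (congrFun hval.symm (Sum.inl i0)) (Sum.inr i0)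
  simp [Matrix.one_apply] at h10
end

section
/- Let A be a finite dimensional associative algebra with a generalized H-action, J an H-invariant nilpotent two-sided ideal with J^p = 0, and fix a vector space decomposition A/J = B_1 ⊕ ⋯ ⊕ B_q and linear section κ : A/J → A of the projection π. Define d as the maximal dimension of B_{i_1} ⊕ ⋯ ⊕ B_{i_r} over tuples with (Hκ(B_{i_1}))A⁺(Hκ(B_{i_2}))A⁺⋯A⁺(Hκ(B_{i_r})) ≠ 0 (A⁺ = A + F·1). Then for every partition λ = (λ_1,…,λ_s) ⊢ n with Σ_{k=d+1}^{s} λ_k ≥ p, the multiplicity m(A,H,λ) of the irreducible S_n-character χ(λ) in the n-th H-cocharacter of A is zero. -/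
set_option linter.unusedSectionVars false
set_option linter.unusedVariables false
set_option maxHeartbeats 1000000


/-- Product of the elements of a list in a possibly non-unital ring
(`0` for the empty list). -/
def prodNE {A : Type*} [NonUnitalRing A] : List A → A
  | [] => 0
  | (x :: xs) => xs.foldl (· * ·) x

/-- Evaluation of the multilinear `H`-monomial
`x_{σ(1)}^{h_1} ⋯ x_{σ(n)}^{h_n}` at the substitution `x_i ↦ a i`. -/
noncomputable def evalHMonomial {F H A : Type*} [Field F] [Ring H] [Algebra F H]
    [NonUnitalRing A] [Module F A] (ζ : H →ₐ[F] Module.End F A) {n : ℕ}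
    (σ : Equiv.Perm (Fin n)) (h : Fin n → H) (a : Fin n → A) : A :=
  prodNE (List.ofFn fun i => ζ (h i) (a (σ i)))

/-- Product of two subspaces of an algebra. -/
def subMul {F A : Type*} [Field F] [NonUnitalRing A] [Module F A]
    (X Y : Submodule F A) : Submodule F A :=
  Submodule.span F {z | ∃ x ∈ X, ∃ y ∈ Y, z = x * y}

/-- The product `(H κ(B_{i_1})) A⁺ (H κ(B_{i_2})) A⁺ ⋯ A⁺ (H κ(B_{i_r}))` for a
tuple `(i_1, …, i_r)`, where `f i = H κ(B_i)` and `X A⁺ Y = X Y + X A Y`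
(`A⁺ = A + F·1`). -/
def chainProd {F A : Type*} [Field F] [NonUnitalRing A] [Module F A] {q : ℕ}
    (f : Fin q → Submodule F A) : List (Fin q) → Submodule F A
  | [] => ⊥
  | (i :: l) => l.foldl
      (fun acc j => subMul acc (f j) ⊔ subMul (subMul acc ⊤) (f j)) (f i)

/-- The subspace `H · W` of `A`, for a subspace `W ⊆ A`. -/
def hSpan {F H A : Type*} [Field F] [Ring H] [Algebra F H]
    [NonUnitalRing A] [Module F A] (ζ : H →ₐ[F] Module.End F A)
    (W : Submodule F A) : Submodule F A :=
  Submodule.span F {x | ∃ (h : H), ∃ v ∈ W, x = ζ h v}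

section ProdNE
variable {A : Type*} [NonUnitalRing A]

theorem prodNE_singleton (x : A) : prodNE [x] = x := rfl

theorem prodNE_concat (l : List A) (hl : l ≠ []) (y : A) :
    prodNE (l ++ [y]) = prodNE l * y := by
  obtain ⟨x, xs, rfl⟩ := List.exists_cons_of_ne_nil hl
  show (xs ++ [y]).foldl (· * ·) x = _
  rw [List.foldl_append]
  rfl

theorem prodNE_append (l₁ l₂ : List A) (h₁ : l₁ ≠ []) (h₂ : l₂ ≠ []) :
    prodNE (l₁ ++ l₂) = prodNE l₁ * prodNE l₂ := by
  induction l₂ using List.reverseRecOn with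
  | nil => simp at h₂
  | append_singleton l₂ y ih =>
    rcases eq_or_ne l₂ [] with rfl | hne
    · simpa [prodNE_singleton] using prodNE_concat l₁ h₁ y
    · rw [← List.append_assoc, prodNE_concat _ (fun h => h₁ (List.append_eq_nil_iff.mp h).1) y,
        ih hne, prodNE_concat _ hne, mul_assoc]

theorem inr_prodNE {F : Type*} [Field F] [Module F A] [SMulCommClass F A A]
    [IsScalarTower F A A] (l : List A) (hl : l ≠ []) :
    (Unitization.inr (prodNE l) : Unitization F A) = (l.map (fun x : A => (Unitization.inr x : Unitization F A))).prod := by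
  induction l using List.reverseRecOn with
  | nil => simp at hl
  | append_singleton l y ih =>
    rcases eq_or_ne l [] with rfl | hne
    · simp [prodNE_singleton]
    · rw [prodNE_concat _ hne, List.map_append, List.prod_append, ← ih hne]
      simp [Unitization.inr_mul]
end ProdNE

section SubMul
variable {F A : Type*} [Field F] [NonUnitalRing A] [Module F A]
  [SMulCommClass F A A] [IsScalarTower F A A]

theorem mem_subMul {X Y : Submodule F A} {x y : A} (hx : x ∈ X) (hy : y ∈ Y) :
    x * y ∈ subMul X Y :=
  Submodule.subset_span ⟨x, hx, y, hy, rfl⟩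

theorem subMul_le {X Y Z : Submodule F A} (h : ∀ x ∈ X, ∀ y ∈ Y, x * y ∈ Z) :
    subMul X Y ≤ Z := by
  apply Submodule.span_le.mpr
  rintro _ ⟨x, hx, y, hy, rfl⟩
  exact h x hx y hy

theorem subMul_bot_left (Y : Submodule F A) : subMul (⊥ : Submodule F A) Y = ⊥ := by
  refine le_bot_iff.mp (subMul_le ?_)
  rintro x hx y _
  rw [Submodule.mem_bot] at hx ⊢
  rw [hx, zero_mul]

theorem subMul_mono {X X' Y Y' : Submodule F A} (hX : X ≤ X') (hY : Y ≤ Y') :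
    subMul X Y ≤ subMul X' Y' :=
  subMul_le fun x hx y hy => mem_subMul (hX hx) (hY hy)

theorem subMul_subMul_le {X Y Z W : Submodule F A}
    (h : ∀ y ∈ Y, ∀ z ∈ Z, y * z ∈ W) :
    subMul (subMul X Y) Z ≤ subMul X W := by
  refine subMul_le fun t ht z hz => ?_
  induction ht using Submodule.span_induction with
  | mem u hu =>
    obtain ⟨x, hx, y, hy, rfl⟩ := hu
    rw [mul_assoc]
    exact mem_subMul hx (h y hy z hz)
  | zero => rw [zero_mul]; exact Submodule.zero_mem _
  | add u v _ _ hu hv => rw [add_mul]; exact Submodule.add_mem _ hu hv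
  | smul c u _ hu => rw [smul_mul_assoc]; exact Submodule.smul_mem _ c hu

theorem subMul_sup_left {X Y Z : Submodule F A} :
    subMul (X ⊔ Y) Z ≤ subMul X Z ⊔ subMul Y Z := by
  refine subMul_le fun t ht z hz => ?_
  obtain ⟨x, hx, y, hy, rfl⟩ := Submodule.mem_sup.mp ht
  rw [add_mul]
  exact Submodule.add_mem _ (Submodule.mem_sup_left (mem_subMul hx hz))
    (Submodule.mem_sup_right (mem_subMul hy hz))

end SubMul

section Chain
variable {F A : Type*} [Field F] [NonUnitalRing A] [Module F A]
  [SMulCommClass F A A] [IsScalarTower F A A] {q : ℕ}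

/-- The step function in `chainProd`. -/
def cpStep (f : Fin q → Submodule F A) (acc : Submodule F A) (j : Fin q) : Submodule F A :=
  subMul acc (f j) ⊔ subMul (subMul acc ⊤) (f j)

theorem chainProd_cons (f : Fin q → Submodule F A) (i : Fin q) (l : List (Fin q)) :
    chainProd f (i :: l) = l.foldl (cpStep f) (f i) := rfl

theorem cpStep_bot (f : Fin q → Submodule F A) (j : Fin q) : cpStep f ⊥ j = ⊥ := by
  simp [cpStep, subMul_bot_left]

theorem cpStep_mono (f : Fin q → Submodule F A) {X X' : Submodule F A} (h : X ≤ X')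
    (j : Fin q) : cpStep f X j ≤ cpStep f X' j :=
  sup_le_sup (subMul_mono h le_rfl) (subMul_mono (subMul_mono h le_rfl) le_rfl)

theorem cpStep_le_subMul_top (f : Fin q → Submodule F A) (X : Submodule F A) (j : Fin q) :
    cpStep f X j ≤ subMul X ⊤ :=
  sup_le (subMul_mono le_rfl le_top)
    (le_trans (subMul_mono le_rfl le_top) (subMul_subMul_le fun y _ z _ => trivial))

theorem cpStep_skip (f : Fin q → Submodule F A) (X : Submodule F A) (i j : Fin q) :
    cpStep f (cpStep f X i) j ≤ cpStep f X j := by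
  have h1 : cpStep f X i ≤ subMul X ⊤ := cpStep_le_subMul_top f X i
  refine sup_le ?_ ?_
  · exact le_sup_of_le_right (subMul_mono h1 le_rfl)
  · refine le_sup_of_le_right (subMul_mono ?_ le_rfl)
    exact le_trans (subMul_mono h1 le_rfl) (subMul_subMul_le fun y _ z _ => trivial)

theorem foldl_cpStep_mono (f : Fin q → Submodule F A) {X X' : Submodule F A} (h : X ≤ X') :
    ∀ l : List (Fin q), l.foldl (cpStep f) X ≤ l.foldl (cpStep f) X'
  | [] => h
  | (j :: l) => foldl_cpStep_mono f (cpStep_mono f h j) l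

theorem foldl_cpStep_bot (f : Fin q → Submodule F A) :
    ∀ l : List (Fin q), l.foldl (cpStep f) ⊥ = ⊥
  | [] => rfl
  | (j :: l) => by rw [List.foldl_cons, cpStep_bot]; exact foldl_cpStep_bot f l

/-- Removing a non-head element of the chain keeps it nonzero. -/
theorem chainProd_remove (f : Fin q → Submodule F A) (l₁ : List (Fin q)) (h₁ : l₁ ≠ [])
    (i : Fin q) (l₂ : List (Fin q)) (h : chainProd f (l₁ ++ i :: l₂) ≠ ⊥) :
    chainProd f (l₁ ++ l₂) ≠ ⊥ := by
  obtain ⟨x, xs, rfl⟩ := List.exists_cons_of_ne_nil h₁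
  rw [List.cons_append, chainProd_cons, List.foldl_append] at h
  rw [List.cons_append, chainProd_cons, List.foldl_append]
  set acc := List.foldl (cpStep f) (f x) xs with hacc
  match l₂ with
  | [] =>
    simp only [List.foldl_cons, List.foldl_nil] at h ⊢
    intro hbot
    rw [hbot, cpStep_bot] at h
    exact h rfl
  | (j :: l₂') =>
    simp only [List.foldl_cons] at h ⊢
    intro hbot
    apply h
    rw [← le_bot_iff]
    calc List.foldl (cpStep f) (cpStep f (cpStep f acc i) j) l₂'
        ≤ List.foldl (cpStep f) (cpStep f acc j) l₂' :=
          foldl_cpStep_mono f (cpStep_skip f acc i j) l₂'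
      _ ≤ ⊥ := le_of_eq hbot

theorem exists_dup {α : Type*} : ∀ (l : List α), ¬ l.Nodup →
    ∃ (l₁ : List α) (i : α) (l₂ : List α), l = l₁ ++ i :: l₂ ∧ i ∈ l₁
  | [], h => absurd List.nodup_nil h
  | (x :: xs), h => by
    by_cases hx : x ∈ xs
    · obtain ⟨a, b, rfl⟩ := List.append_of_mem hx
      exact ⟨x :: a, x, b, rfl, List.mem_cons_self⟩
    · have hxs : ¬ xs.Nodup := fun hn => h (List.nodup_cons.mpr ⟨hx, hn⟩)
      obtain ⟨l₁, i, l₂, rfl, hi⟩ := exists_dup xs hxs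
      exact ⟨x :: l₁, i, l₂, rfl, List.mem_cons_of_mem x hi⟩

/-- From a nonzero chain, extract a nonzero chain with no duplicates covering
the same indices. -/
theorem chainProd_dedup (f : Fin q → Submodule F A) :
    ∀ (l : List (Fin q)), l ≠ [] → chainProd f l ≠ ⊥ →
    ∃ l' : List (Fin q), l' ≠ [] ∧ l'.Nodup ∧ chainProd f l' ≠ ⊥ ∧
      l.toFinset ⊆ l'.toFinset := by
  suffices H : ∀ (N : ℕ) (l : List (Fin q)), l.length ≤ N → l ≠ [] → chainProd f l ≠ ⊥ →
      ∃ l' : List (Fin q), l' ≠ [] ∧ l'.Nodup ∧ chainProd f l' ≠ ⊥ ∧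
        l.toFinset ⊆ l'.toFinset by
    exact fun l => H l.length l le_rfl
  intro N
  induction N with
  | zero =>
    intro l hl hne _
    exact absurd (List.length_eq_zero_iff.mp (Nat.le_zero.mp hl)) hne
  | succ N ih =>
    intro l hl hne hbot
    by_cases hnd : l.Nodup
    · exact ⟨l, hne, hnd, hbot, le_refl _⟩
    · obtain ⟨l₁, i, l₂, rfl, hi⟩ := exists_dup l hnd
      have h₁ : l₁ ≠ [] := fun h => by simp [h] at hi
      have hlen : (l₁ ++ l₂).length ≤ N := by
        simp only [List.length_append, List.length_cons] at hl ⊢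
        omega
      obtain ⟨l', h1, h2, h3, h4⟩ := ih (l₁ ++ l₂) hlen
        (fun h => h₁ (List.append_eq_nil_iff.mp h).1)
        (chainProd_remove f l₁ h₁ i l₂ hbot)
      refine ⟨l', h1, h2, h3, fun x hx => h4 ?_⟩
      simp only [List.toFinset_append, Finset.mem_union, List.mem_toFinset] at hx ⊢
      rcases hx with h | h
      · exact Or.inl h
      · rcases List.mem_cons.mp h with rfl | h
        · exact Or.inl hi
        · exact Or.inr h

end Chain

section Jpow
variable {F A : Type*} [Field F] [NonUnitalRing A] [Module F A]
  [SMulCommClass F A A] [IsScalarTower F A A]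

open scoped Classical

theorem subMul_span_left_le {S : Set A} {Y Z : Submodule F A}
    (h : ∀ s ∈ S, ∀ y ∈ Y, s * y ∈ Z) : subMul (Submodule.span F S) Y ≤ Z := by
  refine subMul_le fun t ht y hy => ?_
  induction ht using Submodule.span_induction with
  | mem u hu => exact h u hu y hy
  | zero => rw [zero_mul]; exact Submodule.zero_mem _
  | add u v _ _ hu hv => rw [add_mul]; exact Submodule.add_mem _ hu hv
  | smul c u _ hu => rw [smul_mul_assoc]; exact Submodule.smul_mem _ c hu

variable (J : Submodule F A)

/-- `JQ J k = J^{k+1}` as a subspace. -/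
def JQ : ℕ → Submodule F A
  | 0 => J
  | (k+1) => subMul (JQ k) J

/-- Products of `k` elements of `J`. -/
def genJ (k : ℕ) : Set A :=
  {x | ∃ l : List A, l.length = k ∧ (∀ y ∈ l, y ∈ J) ∧ x = prodNE l}

theorem JQ_le_span : ∀ k : ℕ, JQ J k ≤ Submodule.span F (genJ J (k + 1))
  | 0 => fun x hx => Submodule.subset_span ⟨[x], rfl, by simpa using (show x ∈ J from hx), rfl⟩
  | (k+1) => by
    show subMul (JQ J k) J ≤ _
    refine le_trans (subMul_mono (JQ_le_span k) le_rfl) (subMul_span_left_le ?_)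
    rintro s ⟨l, hlen, hmem, rfl⟩ y hy
    refine Submodule.subset_span ⟨l ++ [y], by simp [hlen], ?_, ?_⟩
    · intro z hz
      rcases List.mem_append.mp hz with h | h
      · exact hmem z h
      · rw [List.mem_singleton.mp h]; exact hy
    · rw [prodNE_concat l (by rintro rfl; simp at hlen) y]

theorem JQ_eq_bot (p : ℕ) (hp : 1 ≤ p)
    (hJp : ∀ l : List A, l.length = p → (∀ x ∈ l, x ∈ J) → prodNE l = 0) :
    ∀ k, p - 1 ≤ k → JQ J k = ⊥ := by
  have hbase : JQ J (p - 1) = ⊥ := by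
    refine le_bot_iff.mp (le_trans (JQ_le_span J (p-1)) ?_)
    rw [Submodule.span_le]
    rintro x ⟨l, hlen, hmem, rfl⟩
    have : l.length = p := by omega
    simp [hJp l this hmem]
  intro k hk
  induction k with
  | zero => simpa [Nat.le_zero.mp hk] using hbase
  | succ k ih =>
    rcases Nat.lt_or_ge (p - 1) (k + 1) with h | h
    · have : JQ J k = ⊥ := ih (by omega)
      show subMul (JQ J k) J = ⊥
      rw [this, subMul_bot_left]
    · have : p - 1 = k + 1 := le_antisymm hk h
      rw [← this]; exact hbase

/-- Trailing-tail-absorbing envelope of `J^m`. -/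
def WJ : ℕ → Submodule F A
  | 0 => ⊤
  | (m+1) => JQ J m ⊔ subMul (JQ J m) ⊤

theorem prodNE_mem_WJ (hJl : ∀ (a : A), ∀ x ∈ J, a * x ∈ J) :
    ∀ L : List A, L ≠ [] → prodNE L ∈ WJ J (L.countP (fun x => decide (x ∈ J))) := by
  intro L
  induction L using List.reverseRecOn with
  | nil => intro h; simp at h
  | append_singleton L x ih =>
    intro _
    rcases eq_or_ne L [] with rfl | hne
    · simp only [List.nil_append]
      by_cases hx : x ∈ J
      · rw [show ([x].countP (fun y => decide (y ∈ J))) = 1 by simp [List.countP_cons, hx]]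
        exact Submodule.mem_sup_left (show x ∈ JQ J 0 from hx)
      · rw [show ([x].countP (fun y => decide (y ∈ J))) = 0 by simp [List.countP_cons, hx]]
        trivial
    · have hprod := prodNE_concat L hne x
      have hmem := ih hne
      set m := L.countP (fun y => decide (y ∈ J)) with hm
      by_cases hx : x ∈ J
      · rw [show ((L ++ [x]).countP (fun y => decide (y ∈ J))) = m + 1 by
          simp [List.countP_append, List.countP_cons, hx, hm]]
        rw [hprod]
        match m with
        | 0 =>
          exact Submodule.mem_sup_left (show prodNE L * x ∈ JQ J 0 from hJl _ x hx)
        | (k+1) =>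
          obtain ⟨u, hu, v, hv, huv⟩ := Submodule.mem_sup.mp hmem
          have h1 : u * x ∈ JQ J (k+1) := mem_subMul hu hx
          have h2 : v * x ∈ JQ J (k+1) := by
            have : subMul (subMul (JQ J k) ⊤) J ≤ subMul (JQ J k) J :=
              subMul_subMul_le (fun y _ z hz => hJl y z hz)
            exact this (mem_subMul hv hx)
          have : prodNE L * x = u * x + v * x := by rw [← add_mul, huv]
          rw [this]
          exact Submodule.mem_sup_left (Submodule.add_mem _ h1 h2)
      · rw [show ((L ++ [x]).countP (fun y => decide (y ∈ J))) = m by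
          simp [List.countP_append, List.countP_cons, hx, hm]]
        rw [hprod]
        match m with
        | 0 => trivial
        | (k+1) =>
          obtain ⟨u, hu, v, hv, huv⟩ := Submodule.mem_sup.mp hmem
          have h1 : u * x ∈ subMul (JQ J k) ⊤ := mem_subMul hu trivial
          have h2 : v * x ∈ subMul (JQ J k) ⊤ := by
            have : subMul (subMul (JQ J k) ⊤) ⊤ ≤ subMul (JQ J k) ⊤ :=
              subMul_subMul_le (fun y _ z _ => trivial)
            exact this (mem_subMul hv trivial)
          have : prodNE L * x = u * x + v * x := by rw [← add_mul, huv]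
          rw [this]
          exact Submodule.mem_sup_right (Submodule.add_mem _ h1 h2)

theorem prodNE_eq_zero_of_countJ (hJl : ∀ (a : A), ∀ x ∈ J, a * x ∈ J)
    (p : ℕ) (hp : 1 ≤ p)
    (hJp : ∀ l : List A, l.length = p → (∀ x ∈ l, x ∈ J) → prodNE l = 0)
    (L : List A) (hL : L ≠ [])
    (hc : p ≤ L.countP (fun x => decide (x ∈ J))) : prodNE L = 0 := by
  have hmem := prodNE_mem_WJ J hJl L hL
  set m := L.countP (fun x => decide (x ∈ J)) with hm
  match m, hc with
  | 0, hc => exact absurd hc (by omega)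
  | (k+1), hc =>
    have hk : JQ J k = ⊥ := JQ_eq_bot J p hp hJp k (by omega)
    have : WJ J (k+1) = ⊥ := by
      show JQ J k ⊔ subMul (JQ J k) ⊤ = ⊥
      rw [hk, subMul_bot_left, sup_bot_eq]
    rw [this] at hmem
    simpa using hmem

end Jpow

section ChainCore
variable {F A : Type*} [Field F] [NonUnitalRing A] [Module F A]
  [SMulCommClass F A A] [IsScalarTower F A A] {q : ℕ}

theorem chainProd_concat (f : Fin q → Submodule F A) (L : List (Fin q)) (hL : L ≠ [])
    (i : Fin q) : chainProd f (L ++ [i]) = cpStep f (chainProd f L) i := by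
  obtain ⟨a, t, rfl⟩ := List.exists_cons_of_ne_nil hL
  rw [List.cons_append, chainProd_cons, List.foldl_append, chainProd_cons]
  rfl

theorem chain_split (f : Fin q → Submodule F A) :
    ∀ P : List (A × Option (Fin q)),
      (∀ x i, (x, some i) ∈ P → x ∈ f i) →
      P.filterMap Prod.snd ≠ [] →
      ∃ P₀ P₁ P₂ : List (A × Option (Fin q)),
        P = P₀ ++ P₁ ++ P₂ ∧ P₁ ≠ [] ∧
        prodNE (P₁.map Prod.fst) ∈ chainProd f (P.filterMap Prod.snd) := by
  intro P
  induction P using List.reverseRecOn with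
  | nil => intro _ h; simp at h
  | append_singleton P pr ih =>
    intro hmem hne
    obtain ⟨x, o⟩ := pr
    match o with
    | none =>
      have hfm : (P ++ [(x, none)]).filterMap Prod.snd = P.filterMap Prod.snd := by
        simp [List.filterMap_append]
      rw [hfm] at hne ⊢
      obtain ⟨P₀, P₁, P₂, heq, hP₁, hmemc⟩ :=
        ih (fun y i hyi => hmem y i (List.mem_append_left _ hyi)) hne
      exact ⟨P₀, P₁, P₂ ++ [(x, none)], by rw [heq]; simp, hP₁, hmemc⟩
    | some i =>
      have hfm : (P ++ [(x, some i)]).filterMap Prod.snd = P.filterMap Prod.snd ++ [i] := by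
        simp [List.filterMap_append]
      have hxi : x ∈ f i := hmem x i (by simp)
      rw [hfm]
      rcases eq_or_ne (P.filterMap Prod.snd) [] with hPf | hPf
      · refine ⟨P, [(x, some i)], [], by simp, by simp, ?_⟩
        rw [hPf, List.nil_append]
        show prodNE [x] ∈ chainProd f [i]
        rw [prodNE_singleton]
        exact hxi
      · obtain ⟨P₀, P₁, P₂, heq, hP₁, hmemc⟩ :=
          ih (fun y j hyj => hmem y j (List.mem_append_left _ hyj)) hPf
        refine ⟨P₀, P₁ ++ P₂ ++ [(x, some i)], [], by rw [heq]; simp, by simp, ?_⟩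
        rw [chainProd_concat f _ hPf i]
        rcases eq_or_ne P₂ [] with rfl | hP₂
        · rw [List.append_nil, List.map_append]
          simp only [List.map_cons, List.map_nil]
          rw [prodNE_append _ _ (by simpa using hP₁) (by simp), prodNE_singleton]
          exact Submodule.mem_sup_left (mem_subMul hmemc hxi)
        · rw [List.map_append, List.map_append]
          simp only [List.map_cons, List.map_nil]
          rw [prodNE_append _ _
              (by intro hnil
                  rw [← List.map_append] at hnil
                  exact hP₁ (List.append_eq_nil_iff.mp (List.map_eq_nil_iff.mp hnil)).1) (by simp),
            prodNE_append _ _ (by simpa using hP₁) (by simpa using hP₂), prodNE_singleton]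
          exact Submodule.mem_sup_right (mem_subMul (mem_subMul hmemc trivial) hxi)

theorem chainProd_ne_bot_of_prodNE (f : Fin q → Submodule F A)
    (P : List (A × Option (Fin q)))
    (hmem : ∀ x i, (x, some i) ∈ P → x ∈ f i)
    (hne : P.filterMap Prod.snd ≠ [])
    (hprod : prodNE (P.map Prod.fst) ≠ 0) :
    chainProd f (P.filterMap Prod.snd) ≠ ⊥ := by
  obtain ⟨P₀, P₁, P₂, heq, hP₁, hmemc⟩ := chain_split f P hmem hne
  set c := prodNE (P₁.map Prod.fst) with hc
  have hcne : c ≠ 0 := by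
    intro hc0
    apply hprod
    rw [heq]
    have hmap : ∀ Q : List (A × Option (Fin q)), Q ≠ [] → (Q.map Prod.fst) ≠ [] := by
      intro Q hQ h; exact hQ (List.map_eq_nil_iff.mp h)
    rcases eq_or_ne P₀ [] with rfl | h₀ <;> rcases eq_or_ne P₂ [] with rfl | h₂
    · simpa using hc0
    · rw [List.nil_append, List.map_append,
        prodNE_append _ _ (hmap _ hP₁) (hmap _ h₂), ← hc, hc0, zero_mul]
    · rw [List.append_nil, List.map_append,
        prodNE_append _ _ (hmap _ h₀) (hmap _ hP₁), ← hc, hc0, mul_zero]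
    · rw [List.map_append, List.map_append, prodNE_append _ _
        (by intro hnil; exact (hmap _ h₀) (List.append_eq_nil_iff.mp hnil).1) (hmap _ h₂),
        prodNE_append _ _ (hmap _ h₀) (hmap _ hP₁), ← hc, hc0, mul_zero, zero_mul]
  intro hbot
  rw [hbot] at hmemc
  exact hcne (Submodule.mem_bot F |>.mp hmemc)

end ChainCore

theorem countP_ofFn {α : Type*} {nn : ℕ} (g : Fin nn → α) (pr : α → Bool) :
    (List.ofFn g).countP pr = (Finset.univ.filter (fun k => pr (g k))).card := by
  classical
  rw [List.ofFn_eq_map, List.countP_map, List.countP_eq_length_filter]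
  have h1 : Finset.univ.filter (fun k => pr (g k)) =
      ((List.finRange nn).filter (fun k => pr (g k))).toFinset := by
    ext k
    simp [List.mem_filter, List.mem_finRange]
  rw [h1, List.toFinset_card_of_nodup ((List.nodup_finRange nn).filter _)]
  rfl


theorem sum_toFinset_of_nodup {α : Type*} [DecidableEq α] (l : List α) (hl : l.Nodup)
    (f : α → ℕ) : ∑ i ∈ l.toFinset, f i = (l.map f).sum := by
  induction l with
  | nil => simp
  | cons x xs ih =>
    rw [List.nodup_cons] at hl
    rw [List.toFinset_cons, Finset.sum_insert (by simpa using hl.1), List.map_cons,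
      List.sum_cons, ih hl.2]

/-- Lemma 5 of the paper: let `A` be a finite dimensional algebra
with a generalized `H`-action, `J` an `H`-invariant two-sided ideal with
`J^p = 0`, `A = κ(B_1) ⊕ ⋯ ⊕ κ(B_q) ⊕ J` (image of a linear section
`κ : A/J → A` of the projection), and let `d` be the maximal dimension of
`B_{i_1} ⊕ ⋯ ⊕ B_{i_r}` over tuples with
`(Hκ(B_{i_1}))A⁺⋯A⁺(Hκ(B_{i_r})) ≠ 0`. Then for every partition
`λ ⊢ n` (given by a Young diagram `Y` with `n` cells) with at least `p` cells
below the `d`-th row, the multiplicity `m(A, H, λ)` in the `n`-th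
`H`-cocharacter of `A` vanishes; equivalently, for every Young tableau `T` of
shape `λ`, the Young symmetrizer `e*_T = b_T a_T` sends every multilinear
`H`-polynomial to an `H`-identity of `A`. -/
theorem stmt9 {F H A : Type*} [Field F] [CharZero F] [Ring H] [Algebra F H]
    [NonUnitalRing A] [Module F A] [SMulCommClass F A A] [IsScalarTower F A A]
    [FiniteDimensional F A]
    (ζ : H →ₐ[F] Module.End F A)
    (hgen : ∀ h : H, ∃ (k : ℕ) (h₁ h₂ h₃ h₄ : Fin k → H), ∀ a b : A,
      ζ h (a * b) =
        ∑ i, (ζ (h₁ i) a * ζ (h₂ i) b + ζ (h₃ i) b * ζ (h₄ i) a))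
    -- the ideal J
    (J : Submodule F A)
    (hJl : ∀ (a : A), ∀ x ∈ J, a * x ∈ J)
    (hJr : ∀ (a : A), ∀ x ∈ J, x * a ∈ J)
    (hJH : ∀ (h : H), ∀ x ∈ J, ζ h x ∈ J)
    (p : ℕ) (hp : 1 ≤ p)
    (hJp : ∀ l : List A, l.length = p → (∀ x ∈ l, x ∈ J) → prodNE l = 0)
    -- the decomposition A = κ(B_1) ⊕ ⋯ ⊕ κ(B_q) ⊕ J, where V i = κ(B_i)
    (q : ℕ) (V : Fin q → Submodule F A)
    (hsup : (⨆ i, V i) ⊔ J = ⊤)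
    (hind : iSupIndep (fun o : Option (Fin q) => o.elim J V))
    -- the number d
    (d : ℕ)
    (hd_ub : ∀ l : List (Fin q), l ≠ [] → l.Nodup →
      chainProd (fun i => hSpan ζ (V i)) l ≠ ⊥ →
      (l.map fun i => Module.finrank F (V i)).sum ≤ d)
    (hd_attained : d = 0 ∨ ∃ l : List (Fin q), l ≠ [] ∧ l.Nodup ∧
      chainProd (fun i => hSpan ζ (V i)) l ≠ ⊥ ∧
      (l.map fun i => Module.finrank F (V i)).sum = d)
    -- the partition λ ⊢ n with at least p cells below the d-th row
    (n : ℕ) (Y : YoungDiagram) (hY : Y.card = n)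
    (hrows : p ≤ (Y.cells.filter fun c => d ≤ c.1).card)
    -- a Young tableau of shape Y
    (T : Fin n → ℕ × ℕ) (hTinj : Function.Injective T) (hT : ∀ i, T i ∈ Y) :
    -- e*_T f ∈ Id^H(A) for every multilinear H-polynomial f
    ∀ (σ : Equiv.Perm (Fin n)) (h : Fin n → H) (a : Fin n → A),
      ∑ τ ∈ Finset.univ.filter
          (fun τ : Equiv.Perm (Fin n) => ∀ i, (T (τ i)).2 = (T i).2),
        ∑ ρ ∈ Finset.univ.filter
          (fun ρ : Equiv.Perm (Fin n) => ∀ i, (T (ρ i)).1 = (T i).1),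
          (Equiv.Perm.sign τ : ℤ) • evalHMonomial ζ (τ * ρ * σ) h a = 0 := by
  intro σ h a
  classical
  -- trivial case n = 0
  rcases Nat.eq_zero_or_pos n with hn0 | hn
  · subst hn0
    have hz : ∀ π : Equiv.Perm (Fin 0), evalHMonomial ζ π h a = 0 := by
      intro π
      simp [evalHMonomial, List.ofFn_zero, prodNE]
    simp [hz]
  -- basic facts
  have hpn : p ≤ n := by
    calc p ≤ (Y.cells.filter fun c => d ≤ c.1).card := hrows
      _ ≤ Y.cells.card := Finset.card_filter_le _ _
      _ = n := hY
  set f : Fin q → Submodule F A := fun i => hSpan ζ (V i) with hf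
  let bas : ∀ i : Fin q, Module.Basis (Fin (Module.finrank F ↥(V i))) F ↥(V i) :=
    fun i => Module.finBasis F ↥(V i)
  -- decomposition of an arbitrary element
  have hdec : ∀ x : A, ∃ (c : (Σ i : Fin q, Fin (Module.finrank F ↥(V i))) → F) (jx : A),
      jx ∈ J ∧ x = (∑ u : Σ i : Fin q, Fin (Module.finrank F ↥(V i)),
        c u • ((bas u.1 u.2 : ↥(V u.1)) : A)) + jx := by
    intro x
    have hx : x ∈ (⨆ i, V i) ⊔ J := by rw [hsup]; trivial
    obtain ⟨v, hv, jx, hj, rfl⟩ := Submodule.mem_sup.mp hx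
    rw [Submodule.mem_iSup_iff_exists_finsupp] at hv
    obtain ⟨fsp, hfsp, hfsum⟩ := hv
    have hfsum' : ∑ i : Fin q, fsp i = v := by
      rw [← hfsum]; exact (Finsupp.sum_fintype (f := fsp) (g := fun _ m => m) (fun i => rfl)).symm
    refine ⟨fun u => ((bas u.1).repr ⟨fsp u.1, hfsp u.1⟩) u.2, jx, hj, ?_⟩
    congr 1
    rw [← hfsum', ← Finset.univ_sigma_univ, Finset.sum_sigma]
    refine Finset.sum_congr rfl (fun i _ => ?_)
    have hb := (bas i).sum_repr ⟨fsp i, hfsp i⟩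
    have hb2 := congrArg (Submodule.subtype (V i)) hb
    have hb3 := hb2.symm
    simp only [map_sum, map_smul, Submodule.subtype_apply] at hb3
    exact hb3
  choose cf jf hjf haf using fun k => hdec (a k)
  set ι := Option (Σ i : Fin q, Fin (Module.finrank F ↥(V i))) with hι
  set w : Fin n → ι → A :=
    fun k u => Option.elim u (jf k) (fun s => ((bas s.1 s.2 : ↥(V s.1)) : A)) with hw
  set cc : Fin n → ι → F := fun k u => Option.elim u 1 (fun s => cf k s) with hcc
  have ha : ∀ k, a k = ∑ u : ι, cc k u • w k u := by
    intro k
    rw [Fintype.sum_option]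
    simp only [hw, hcc, Option.elim, one_smul]
    rw [add_comm]
    exact haf k
  -- the multilinear map (with values in the unitization)
  set B := Unitization F A with hB
  set Φ : MultilinearMap F (fun _ : Fin n => A) B :=
    (MultilinearMap.mkPiAlgebraFin F n B).compLinearMap
      (fun k => (Unitization.inrHom F F A).comp (ζ (h k))) with hΦdef
  have hΦ : ∀ b : Fin n → A,
      Φ b = (List.ofFn (fun k => (Unitization.inr (ζ (h k) (b k)) : B))).prod := by
    intro b
    rw [hΦdef, MultilinearMap.compLinearMap_apply, MultilinearMap.mkPiAlgebraFin_apply]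
    rfl
  have hofn : ∀ g : Fin n → A, List.ofFn g ≠ [] := by
    intro g hnil
    have : (List.ofFn g).length = n := List.length_ofFn (f := g)
    rw [hnil] at this
    simp at this
    omega
  have keyeval : ∀ (π : Equiv.Perm (Fin n)) (b : Fin n → A),
      (Unitization.inr (evalHMonomial ζ π h b) : B) = Φ (fun k => b (π k)) := by
    intro π b
    rw [hΦ, evalHMonomial, inr_prodNE _ (hofn _), List.map_ofFn]
    rfl
  -- the expansion of a multilinear monomial over the adapted decomposition
  have expand : ∀ π : Equiv.Perm (Fin n), Φ (fun k => a (π k)) =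
      ∑ r : Fin n → ι, (∏ m : Fin n, cc m (r m)) •
        Φ (fun k => (fun m => w m (r m)) (π k)) := by
    intro π
    have h1 : (fun k => a (π k)) = fun k => ∑ u : ι, cc (π k) u • w (π k) u := by
      funext k; rw [← ha]
    rw [h1, MultilinearMap.map_sum]
    have h2 : ∀ r : Fin n → ι, Φ (fun k => cc (π k) (r k) • w (π k) (r k)) =
        (∏ k : Fin n, cc (π k) (r k)) • Φ (fun k => w (π k) (r k)) :=
      fun r => MultilinearMap.map_smul_univ Φ _ _
    rw [Finset.sum_congr rfl (fun r _ => h2 r)]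
    -- reindex r ↦ r ∘ π
    rw [← Equiv.sum_comp (Equiv.arrowCongr π.symm (Equiv.refl ι))
      (fun r : Fin n → ι => (∏ k : Fin n, cc (π k) (r k)) • Φ (fun k => w (π k) (r k)))]
    refine Finset.sum_congr rfl (fun r _ => ?_)
    show (∏ k : Fin n, cc (π k) (r (π k))) • Φ (fun k => w (π k) (r (π k))) = _
    rw [Equiv.prod_comp π (fun m => cc m (r m))]
  -- the key vanishing claim
  have inner : ∀ (ρ : Equiv.Perm (Fin n)) (r : Fin n → ι),
      (∀ i, (T (ρ i)).1 = (T i).1) →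
      ∑ τ ∈ Finset.univ.filter
          (fun τ : Equiv.Perm (Fin n) => ∀ i, (T (τ i)).2 = (T i).2),
        ((Equiv.Perm.sign τ : ℤ) : F) •
          Φ (fun k => (fun m => w m (r m)) ((τ * ρ * σ) k)) = 0 := by
    intro ρ r hρ1
    set vr : Fin n → A := fun m => w m (r m) with hvr
    by_cases hcol : ∃ k k' : Fin n, k ≠ k' ∧ (T k).2 = (T k').2 ∧ vr k = vr k'
    · -- a collision within a column: terms cancel in pairs
      obtain ⟨k, k', hkk, hsamecol, hveq⟩ := hcol
      set π₀ : Equiv.Perm (Fin n) := Equiv.swap k k' with hπ₀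
      have hπ₀col : ∀ i, (T (π₀ i)).2 = (T i).2 := by
        intro i
        rcases eq_or_ne i k with rfl | hik
        · rw [hπ₀, Equiv.swap_apply_left]; exact hsamecol.symm
        rcases eq_or_ne i k' with rfl | hik'
        · rw [hπ₀, Equiv.swap_apply_right]; exact hsamecol
        · rw [hπ₀, Equiv.swap_apply_of_ne_of_ne hik hik']
      have hvrπ₀ : ∀ m, vr (π₀ m) = vr m := by
        intro m
        rcases eq_or_ne m k with rfl | hik
        · rw [hπ₀, Equiv.swap_apply_left]; exact hveq.symm
        rcases eq_or_ne m k' with rfl | hik'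
        · rw [hπ₀, Equiv.swap_apply_right]; exact hveq
        · rw [hπ₀, Equiv.swap_apply_of_ne_of_ne hik hik']
      refine Finset.sum_involution (fun τ _ => π₀ * τ) ?_ ?_ ?_ ?_
      · intro τ hτ
        have hsign : ((Equiv.Perm.sign (π₀ * τ) : ℤ) : F) =
            -((Equiv.Perm.sign τ : ℤ) : F) := by
          rw [map_mul, hπ₀, Equiv.Perm.sign_swap hkk]
          push_cast
          ring
        have hfun : (fun kk => vr ((π₀ * τ * ρ * σ) kk)) =
            fun kk => vr ((τ * ρ * σ) kk) := by
          funext kk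
          have h5 : (π₀ * τ * ρ * σ) kk = π₀ ((τ * ρ * σ) kk) := by
            simp [Equiv.Perm.mul_apply]
          rw [h5, hvrπ₀]
        show _ + ((Equiv.Perm.sign (π₀ * τ) : ℤ) : F) •
            Φ (fun kk => vr ((π₀ * τ * ρ * σ) kk)) = 0
        rw [hfun, hsign, neg_smul, add_neg_cancel]
      · intro τ hτ hfτ
        intro hEq
        have hπ₀1 : π₀ = 1 := by
          have : π₀ * τ = 1 * τ := by rw [one_mul]; exact hEq
          exact mul_right_cancel this
        have : π₀ k = k := by rw [hπ₀1]; rfl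
        rw [hπ₀, Equiv.swap_apply_left] at this
        exact hkk this.symm
      · intro τ hτ
        simp only [Finset.mem_filter, Finset.mem_univ, true_and] at hτ ⊢
        intro i
        rw [Equiv.Perm.mul_apply, hπ₀col, hτ]
      · intro τ hτ
        show π₀ * (π₀ * τ) = τ
        rw [← mul_assoc, hπ₀, Equiv.swap_mul_self, one_mul]
    · -- no collision: every monomial vanishes
      push_neg at hcol
      refine Finset.sum_eq_zero (fun τ hτ => ?_)
      suffices hzero : Φ (fun k => vr ((τ * ρ * σ) k)) = 0 by rw [hzero, smul_zero]
      set π : Equiv.Perm (Fin n) := τ * ρ * σ with hπdef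
      set g : Fin n → A := fun k => ζ (h k) (vr (π k)) with hg
      have hΦg : Φ (fun k => vr (π k)) = Unitization.inr (prodNE (List.ofFn g)) := by
        rw [hΦ, inr_prodNE _ (hofn g), List.map_ofFn]
        rfl
      rw [hΦg]
      suffices hP : prodNE (List.ofFn g) = 0 by rw [hP]; exact Unitization.inr_zero F
      by_contra hP
      set lab : Fin n → Option (Fin q) := fun k => Option.map Sigma.fst (r (π k)) with hlab
      set Pl : List (A × Option (Fin q)) := List.ofFn (fun k => (g k, lab k)) with hPl
      have hPlfst : Pl.map Prod.fst = List.ofFn g := by rw [hPl, List.map_ofFn]; rfl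
      have hPlmem : ∀ k : Fin n, (g k, lab k) ∈ Pl := by
        intro k; rw [hPl]; exact List.mem_ofFn.mpr ⟨k, rfl⟩
      have hwJ : ∀ k, r (π k) = none → g k ∈ J := by
        intro k hk
        have hv : vr (π k) = jf (π k) := by rw [hvr]; simp only [hk]; rfl
        rw [hg]
        show ζ (h k) (vr (π k)) ∈ J
        rw [hv]
        exact hJH (h k) _ (hjf (π k))
      have hwV : ∀ k (s : Σ i : Fin q, Fin (Module.finrank F ↥(V i))),
          r (π k) = some s → g k ∈ f s.1 := by
        intro k s hk
        have hv : vr (π k) = ((bas s.1 s.2 : ↥(V s.1)) : A) := by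
          rw [hvr]; simp only [hk]; rfl
        have hvV : vr (π k) ∈ V s.1 := by rw [hv]; exact (bas s.1 s.2).2
        show ζ (h k) (vr (π k)) ∈ f s.1
        exact Submodule.subset_span ⟨h k, vr (π k), hvV, rfl⟩
      set l : List (Fin q) := Pl.filterMap Prod.snd with hldef
      rcases eq_or_ne l [] with hlnil | hlne
      · -- every factor lies in J; since n ≥ p the product is zero
        have hallnone : ∀ k, r (π k) = none := by
          intro k
          have h2 := List.filterMap_eq_nil_iff.mp hlnil _ (hPlmem k)
          exact Option.map_eq_none_iff.mp h2
        apply hP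
        refine prodNE_eq_zero_of_countJ J hJl p hp hJp _ (hofn g) ?_
        rw [countP_ofFn]
        have hall : Finset.univ.filter (fun k : Fin n => decide (g k ∈ J) = true) =
            Finset.univ := by
          apply Finset.filter_true_of_mem
          intro k _
          simp [hwJ k (hallnone k)]
        rw [hall, Finset.card_univ]
        simpa using hpn
      · -- the chain of V-factors is nonzero, giving the dimension bound
        have hPmem : ∀ x i, (x, some i) ∈ Pl → x ∈ f i := by
          intro x i hxi
          rw [hPl, List.mem_ofFn] at hxi
          obtain ⟨k, hk⟩ := hxi
          have hx : g k = x := congrArg Prod.fst hk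
          have hlk : lab k = some i := congrArg Prod.snd hk
          obtain ⟨s, hs, hs1⟩ := Option.map_eq_some_iff.mp hlk
          rw [← hx, ← hs1]
          exact hwV k s hs
        have hchain : chainProd f l ≠ ⊥ :=
          chainProd_ne_bot_of_prodNE f Pl hPmem hlne (by rw [hPlfst]; exact hP)
        obtain ⟨l', hl'ne, hl'nd, hl'chain, hl'sub⟩ := chainProd_dedup f l hlne hchain
        have hdub := hd_ub l' hl'ne hl'nd hl'chain
        set S : Finset (Fin q) := l.toFinset with hSdef
        have hSsum : ∑ i ∈ S, Module.finrank F ↥(V i) ≤ d := by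
          calc ∑ i ∈ S, Module.finrank F ↥(V i)
              ≤ ∑ i ∈ l'.toFinset, Module.finrank F ↥(V i) :=
                Finset.sum_le_sum_of_subset hl'sub
            _ = (l'.map fun i => Module.finrank F ↥(V i)).sum :=
                sum_toFinset_of_nodup l' hl'nd _
            _ ≤ d := hdub
        have hlabS : ∀ (m : Fin n) (s : Σ i : Fin q, Fin (Module.finrank F ↥(V i))),
            r m = some s → s.1 ∈ S := by
          intro m s hm
          set k := π.symm m with hkdef
          have hπk : π k = m := by rw [hkdef]; exact π.apply_symm_apply m
          have hlk : lab k = some s.1 := by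
            show Option.map Sigma.fst (r (π k)) = some s.1
            rw [hπk, hm]
            rfl
          have : s.1 ∈ l := List.mem_filterMap.mpr ⟨(g k, lab k), hPlmem k, hlk⟩
          exact List.mem_toFinset.mpr this
        -- counting J-positions
        set KJ : Finset (Fin n) := Finset.univ.filter (fun m => r m = none) with hKJ
        have hKJcard : p ≤ KJ.card := by
          set X : Finset ℕ := Y.cells.image Prod.snd with hX
          have hfib1 : (Y.cells.filter fun c => d ≤ c.1).card =
              ∑ x ∈ X, ((Y.cells.filter fun c => d ≤ c.1).filter fun c => c.2 = x).card :=
            Finset.card_eq_sum_card_fiberwise (fun c hc =>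
              Finset.mem_image.mpr ⟨c, Finset.mem_of_mem_filter _ hc, rfl⟩)
          have hfib2 : KJ.card = ∑ x ∈ X, (KJ.filter fun m => (T m).2 = x).card :=
            Finset.card_eq_sum_card_fiberwise (fun m _ =>
              Finset.mem_image.mpr ⟨T m, (Y.mem_cells _).mpr (hT m), rfl⟩)
          have hTim : Finset.univ.image T = Y.cells := by
            apply Finset.eq_of_subset_of_card_le
            · intro c hc
              obtain ⟨m, _, rfl⟩ := Finset.mem_image.mp hc
              exact (Y.mem_cells _).mpr (hT m)
            · rw [Finset.card_image_of_injective _ hTinj, Finset.card_univ]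
              simp only [Fintype.card_fin]
              exact le_of_eq hY
          have hTsurj : ∀ c ∈ Y.cells, ∃ m : Fin n, T m = c := by
            intro c hc
            rw [← hTim] at hc
            obtain ⟨m, _, hm⟩ := Finset.mem_image.mp hc
            exact ⟨m, hm⟩
          have hpercol : ∀ x ∈ X,
              ((Y.cells.filter fun c => d ≤ c.1).filter fun c => c.2 = x).card
              ≤ (KJ.filter fun m => (T m).2 = x).card := by
            intro x hx
            set colP : Finset (Fin n) := Finset.univ.filter (fun m => (T m).2 = x) with hcolP
            have hcolPcard : colP.card = (Y.cells.filter fun c => c.2 = x).card := by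
              apply Finset.card_bij (fun m _ => T m)
              · intro m hm
                exact Finset.mem_filter.mpr ⟨(Y.mem_cells _).mpr (hT m),
                  (Finset.mem_filter.mp hm).2⟩
              · intro m hm m' hm' heq
                exact hTinj heq
              · intro c hc
                obtain ⟨m, hm⟩ := hTsurj c (Finset.mem_of_mem_filter _ hc)
                exact ⟨m, Finset.mem_filter.mpr ⟨Finset.mem_univ _,
                  by rw [hm]; exact (Finset.mem_filter.mp hc).2⟩, hm⟩
            have hcells_col : (Y.cells.filter fun c => c.2 = x) =
                (Finset.range (Y.colLen x)).image (fun i => (i, x)) := by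
              ext c
              constructor
              · intro hc
                obtain ⟨hcY, hc2⟩ := Finset.mem_filter.mp hc
                refine Finset.mem_image.mpr ⟨c.1, Finset.mem_range.mpr ?_, ?_⟩
                · rw [← YoungDiagram.mem_iff_lt_colLen (j := x)]
                  rw [← hc2]
                  exact (Y.mem_cells c).mp hcY
                · rw [← hc2]
              · intro hc
                obtain ⟨i, hi, rfl⟩ := Finset.mem_image.mp hc
                exact Finset.mem_filter.mpr ⟨(Y.mem_cells _).mpr
                  (YoungDiagram.mem_iff_lt_colLen.mpr (Finset.mem_range.mp hi)), rfl⟩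
            have hcolLen : colP.card = Y.colLen x := by
              rw [hcolPcard, hcells_col, Finset.card_image_of_injective _
                (fun i j hij => by simpa using congrArg Prod.fst hij), Finset.card_range]
            have hcellsd : ((Y.cells.filter fun c => d ≤ c.1).filter fun c => c.2 = x) =
                (Finset.Ico d (Y.colLen x)).image (fun i => (i, x)) := by
              ext c
              constructor
              · intro hc
                obtain ⟨hc1, hc2⟩ := Finset.mem_filter.mp hc
                obtain ⟨hcY, hcd⟩ := Finset.mem_filter.mp hc1
                refine Finset.mem_image.mpr ⟨c.1, Finset.mem_Ico.mpr ⟨hcd, ?_⟩, ?_⟩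
                · rw [← YoungDiagram.mem_iff_lt_colLen (j := x)]
                  rw [← hc2]
                  exact (Y.mem_cells c).mp hcY
                · rw [← hc2]
              · intro hc
                obtain ⟨i, hi, rfl⟩ := Finset.mem_image.mp hc
                obtain ⟨hid, hicol⟩ := Finset.mem_Ico.mp hi
                exact Finset.mem_filter.mpr ⟨Finset.mem_filter.mpr ⟨(Y.mem_cells _).mpr
                  (YoungDiagram.mem_iff_lt_colLen.mpr hicol), hid⟩, rfl⟩
            have hcellsdcard :
                ((Y.cells.filter fun c => d ≤ c.1).filter fun c => c.2 = x).card
                = Y.colLen x - d := by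
              rw [hcellsd, Finset.card_image_of_injective _
                (fun i j hij => by simpa using congrArg Prod.fst hij), Nat.card_Ico]
            set KVx : Finset (Fin n) := colP.filter (fun m => ¬ (r m = none)) with hKVx
            have hKVle : KVx.card ≤ d := by
              have hinj : Set.InjOn r KVx := by
                intro m hm m' hm' heq
                by_contra hne
                obtain ⟨hmc, hmr⟩ := Finset.mem_filter.mp hm
                obtain ⟨hmc', hmr'⟩ := Finset.mem_filter.mp hm'
                have hcolm : (T m).2 = (T m').2 := by
                  rw [(Finset.mem_filter.mp hmc).2, (Finset.mem_filter.mp hmc').2]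
                refine hcol m m' hne hcolm ?_
                show w m (r m) = w m' (r m')
                obtain ⟨s, hs⟩ := Option.ne_none_iff_exists'.mp hmr
                rw [heq] at hs ⊢
                rw [hs]
                rfl
              calc KVx.card = (KVx.image r).card := (Finset.card_image_of_injOn hinj).symm
                _ ≤ ((S.sigma fun i =>
                      (Finset.univ : Finset (Fin (Module.finrank F ↥(V i))))).image
                      (fun s => (some s : ι))).card := by
                    apply Finset.card_le_card
                    intro u hu
                    obtain ⟨m, hm, rfl⟩ := Finset.mem_image.mp hu
                    have hmr := (Finset.mem_filter.mp hm).2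
                    obtain ⟨s, hs⟩ := Option.ne_none_iff_exists'.mp hmr
                    rw [hs]
                    exact Finset.mem_image.mpr ⟨s, Finset.mem_sigma.mpr
                      ⟨hlabS m s hs, Finset.mem_univ _⟩, rfl⟩
                _ ≤ (S.sigma fun i =>
                      (Finset.univ : Finset (Fin (Module.finrank F ↥(V i))))).card :=
                    Finset.card_image_le
                _ = ∑ i ∈ S, Module.finrank F ↥(V i) := by
                    rw [Finset.card_sigma]
                    exact Finset.sum_congr rfl (fun i _ => by simp)
                _ ≤ d := hSsum
            have hsplit : (colP.filter fun m => r m = none).card + KVx.card = colP.card := by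
              rw [hKVx]
              exact Finset.card_filter_add_card_filter_not _
            have hKJx : (KJ.filter fun m => (T m).2 = x) =
                colP.filter (fun m => r m = none) := by
              ext m
              simp only [hKJ, hcolP, Finset.mem_filter, Finset.mem_univ, true_and]
              tauto
            rw [hcellsdcard, hKJx]
            omega
          calc p ≤ (Y.cells.filter fun c => d ≤ c.1).card := hrows
            _ = ∑ x ∈ X, ((Y.cells.filter fun c => d ≤ c.1).filter fun c => c.2 = x).card :=
                hfib1
            _ ≤ ∑ x ∈ X, (KJ.filter fun m => (T m).2 = x).card :=
                Finset.sum_le_sum hpercol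
            _ = KJ.card := hfib2.symm
        -- conclude: at least p factors lie in J
        apply hP
        refine prodNE_eq_zero_of_countJ J hJl p hp hJp _ (hofn g) ?_
        rw [countP_ofFn]
        refine le_trans hKJcard ?_
        have hbij : KJ.card = (Finset.univ.filter (fun k : Fin n => r (π k) = none)).card := by
          apply Finset.card_bij (fun m _ => π.symm m)
          · intro m hm
            refine Finset.mem_filter.mpr ⟨Finset.mem_univ _, ?_⟩
            rw [π.apply_symm_apply]
            exact (Finset.mem_filter.mp hm).2
          · intro m hm m' hm' heq
            exact π.symm.injective heq
          · intro k hk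
            exact ⟨π k, Finset.mem_filter.mpr ⟨Finset.mem_univ _,
              (Finset.mem_filter.mp hk).2⟩, π.symm_apply_apply k⟩
        rw [hbij]
        apply Finset.card_le_card
        intro k hk
        refine Finset.mem_filter.mpr ⟨Finset.mem_univ _, ?_⟩
        simp only [decide_eq_true_eq]
        exact hwJ k (Finset.mem_filter.mp hk).2
  -- assembly
  have hinr0 : (Unitization.inr (0 : A) : B) = 0 := Unitization.inr_zero F
  apply Unitization.inr_injective (R := F)
  rw [hinr0]
  show (Unitization.inrHom F F A) _ = (0 : B)
  rw [map_sum (Unitization.inrHom F F A)]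
  have step1 : ∀ (τ ρ : Equiv.Perm (Fin n)),
      (Unitization.inrHom F F A) ((Equiv.Perm.sign τ : ℤ) • evalHMonomial ζ (τ * ρ * σ) h a)
      = ((Equiv.Perm.sign τ : ℤ) : F) • Φ (fun k => a ((τ * ρ * σ) k)) := by
    intro τ ρ
    rw [map_zsmul, ← Int.cast_smul_eq_zsmul F]
    congr 1
    exact keyeval (τ * ρ * σ) a
  calc ∑ τ ∈ Finset.univ.filter
          (fun τ : Equiv.Perm (Fin n) => ∀ i, (T (τ i)).2 = (T i).2),
        (Unitization.inrHom F F A) (∑ ρ ∈ Finset.univ.filter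
          (fun ρ : Equiv.Perm (Fin n) => ∀ i, (T (ρ i)).1 = (T i).1),
          (Equiv.Perm.sign τ : ℤ) • evalHMonomial ζ (τ * ρ * σ) h a)
      = ∑ τ ∈ Finset.univ.filter
          (fun τ : Equiv.Perm (Fin n) => ∀ i, (T (τ i)).2 = (T i).2),
        ∑ ρ ∈ Finset.univ.filter
          (fun ρ : Equiv.Perm (Fin n) => ∀ i, (T (ρ i)).1 = (T i).1),
          ((Equiv.Perm.sign τ : ℤ) : F) • Φ (fun k => a ((τ * ρ * σ) k)) := by
        refine Finset.sum_congr rfl (fun τ _ => ?_)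
        rw [map_sum]
        exact Finset.sum_congr rfl (fun ρ _ => step1 τ ρ)
    _ = ∑ ρ ∈ Finset.univ.filter
          (fun ρ : Equiv.Perm (Fin n) => ∀ i, (T (ρ i)).1 = (T i).1),
        ∑ τ ∈ Finset.univ.filter
          (fun τ : Equiv.Perm (Fin n) => ∀ i, (T (τ i)).2 = (T i).2),
          ((Equiv.Perm.sign τ : ℤ) : F) • Φ (fun k => a ((τ * ρ * σ) k)) :=
        Finset.sum_comm
    _ = 0 := by
        refine Finset.sum_eq_zero (fun ρ hρ => ?_)
        have hρ1 : ∀ i, (T (ρ i)).1 = (T i).1 := (Finset.mem_filter.mp hρ).2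
        have step2 : ∀ τ : Equiv.Perm (Fin n),
            ((Equiv.Perm.sign τ : ℤ) : F) • Φ (fun k => a ((τ * ρ * σ) k)) =
            ∑ r : Fin n → ι, (∏ m : Fin n, cc m (r m)) •
              (((Equiv.Perm.sign τ : ℤ) : F) •
                Φ (fun k => (fun m => w m (r m)) ((τ * ρ * σ) k))) := by
          intro τ
          rw [expand (τ * ρ * σ), Finset.smul_sum]
          refine Finset.sum_congr rfl (fun r _ => ?_)
          rw [smul_smul, smul_smul, mul_comm]
        rw [Finset.sum_congr rfl (fun τ _ => step2 τ)]
        rw [Finset.sum_comm]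
        refine Finset.sum_eq_zero (fun r _ => ?_)
        rw [← Finset.smul_sum, inner ρ r hρ1, smul_zero]
end

section
/- Let λ = (λ_1, …, λ_s) ⊢ n be a partition with λ_{d+1} + λ_{d+2} + ⋯ + λ_s < p (i.e., at most p−1 boxes below the d-th row). Then the dimension of the irreducible S_n-module M(λ) is at most C n^r d^n for constants C, r depending only on d and p (not on n or λ). -/
/-- The number of standard Young tableaux of shape `Y` (with `n = |Y|` boxes):
bijective fillings of the cells of `Y` by `1, …, n` increasing along rows and
columns. This is the dimension of the irreducible `S_n`-module `M(λ)`. -/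
noncomputable def sytCard (Y : YoungDiagram) (n : ℕ) : ℕ :=
  Nat.card {e : ↥Y.cells ≃ Fin n //
    ∀ a b : ↥Y.cells, (a : ℕ × ℕ).1 ≤ (b : ℕ × ℕ).1 →
      (a : ℕ × ℕ).2 ≤ (b : ℕ × ℕ).2 → e a ≤ e b}

abbrev SYT (Y : YoungDiagram) (n : ℕ) :=
  {e : ↥Y.cells ≃ Fin n //
    ∀ a b : ↥Y.cells, (a : ℕ × ℕ).1 ≤ (b : ℕ × ℕ).1 →
      (a : ℕ × ℕ).2 ≤ (b : ℕ × ℕ).2 → e a ≤ e b}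

/-- helper: one-sided step -/
lemma syt_step {Y : YoungDiagram} {n : ℕ} (e1 e2 : SYT Y n)
    (hrow : ∀ k : Fin n, ((e1.1.symm k : ↥Y.cells) : ℕ × ℕ).1 = ((e2.1.symm k : ↥Y.cells) : ℕ × ℕ).1)
    (k : Fin n)
    (IH : ∀ j : Fin n, j < k → e1.1.symm j = e2.1.symm j)
    (hc : ((e1.1.symm k : ↥Y.cells) : ℕ × ℕ).2 ≤ ((e2.1.symm k : ↥Y.cells) : ℕ × ℕ).2) :
    e1.1.symm k = e2.1.symm k := by
  set i := ((e1.1.symm k : ↥Y.cells) : ℕ × ℕ).1 with hi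
  set c1 := ((e1.1.symm k : ↥Y.cells) : ℕ × ℕ).2 with hc1
  set c2 := ((e2.1.symm k : ↥Y.cells) : ℕ × ℕ).2 with hc2
  have hu : ((e1.1.symm k : ↥Y.cells) : ℕ × ℕ) = (i, c1) := rfl
  have hv : ((e2.1.symm k : ↥Y.cells) : ℕ × ℕ) = (i, c2) := by
    rw [hrow k] at hi
    exact Prod.ext hi.symm rfl
  have hmem2 : (i, c2) ∈ Y := by rw [← hv]; exact (e2.1.symm k).2
  have hmem1 : (i, c1) ∈ Y := Y.up_left_mem le_rfl hc hmem2
  have ha : (e1.1.symm k : ↥Y.cells) = ⟨(i, c1), hmem1⟩ := Subtype.ext hu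
  set a : ↥Y.cells := ⟨(i, c1), hmem1⟩ with hadef
  have hk' : e2.1 a ≤ k := by
    have := e2.2 a (e2.1.symm k) (le_of_eq (by simp [hadef, hv])) (by simpa [hadef, hv] using hc)
    simpa using this
  rcases lt_or_eq_of_le hk' with hlt | heq
  · exfalso
    have h1 := IH (e2.1 a) hlt
    have h2 : e2.1.symm (e2.1 a) = a := e2.1.symm_apply_apply a
    have h3 : e1.1.symm (e2.1 a) = e1.1.symm k := by rw [h1, h2, ← ha]
    have := e1.1.symm.injective h3
    exact absurd this (ne_of_lt hlt)
  · rw [ha, ← heq, e2.1.symm_apply_apply]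

lemma syt_row_injective (Y : YoungDiagram) (n : ℕ) :
    Function.Injective (fun e : SYT Y n =>
      fun k : Fin n => ((e.1.symm k : ↥Y.cells) : ℕ × ℕ).1) := by
  intro e1 e2 h
  have hrow : ∀ k : Fin n, ((e1.1.symm k : ↥Y.cells) : ℕ × ℕ).1 = ((e2.1.symm k : ↥Y.cells) : ℕ × ℕ).1 :=
    fun k => congrFun h k
  have key : ∀ N : ℕ, ∀ k : Fin n, k.1 < N → e1.1.symm k = e2.1.symm k := by
    intro N
    induction N with
    | zero => intro k hk; omega
    | succ N IH =>
      intro k hk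
      have IH' : ∀ j : Fin n, j < k → e1.1.symm j = e2.1.symm j := by
        intro j hj
        exact IH j (by omega)
      rcases le_total ((e1.1.symm k : ↥Y.cells) : ℕ × ℕ).2 ((e2.1.symm k : ↥Y.cells) : ℕ × ℕ).2 with h' | h'
      · exact syt_step e1 e2 hrow k IH' h'
      · exact (syt_step e2 e1 (fun k => (hrow k).symm) k (fun j hj => (IH' j hj).symm) h').symm
  have hsymm : e1.1.symm = e2.1.symm := Equiv.ext (fun k => key n k k.2)
  have : e1.1 = e2.1 := by
    have := congrArg Equiv.symm hsymm
    simpa using this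
  exact Subtype.ext this

lemma cell_row_lt {Y : YoungDiagram} {d p : ℕ}
    (hf : (Y.cells.filter fun c => d ≤ c.1).card < p) {c : ℕ × ℕ}
    (hc : c ∈ Y.cells) : c.1 < d + p := by
  by_cases h : c.1 < d
  · omega
  · push_neg at h
    have hsub : ∀ i ∈ Finset.Icc d c.1,
        (i, 0) ∈ Y.cells.filter fun c => d ≤ c.1 := by
      intro i hi
      simp only [Finset.mem_Icc] at hi
      refine Finset.mem_filter.2 ⟨?_, hi.1⟩
      exact (YoungDiagram.mem_cells _).2 (Y.up_left_mem hi.2 (Nat.zero_le _) ((YoungDiagram.mem_cells _).1 hc))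
    have hinj : Set.InjOn (fun i : ℕ => ((i, 0) : ℕ × ℕ)) (Finset.Icc d c.1) := by
      intro a _ b _ hab
      exact congrArg Prod.fst hab
    have := Finset.card_le_card_of_injOn _ hsub hinj
    rw [Nat.card_Icc] at this
    omega

lemma S_card {Y : YoungDiagram} {n d : ℕ} (e : SYT Y n) :
    (Finset.univ.filter fun k : Fin n =>
        d ≤ ((e.1.symm k : ↥Y.cells) : ℕ × ℕ).1).card
      = (Y.cells.filter fun c => d ≤ c.1).card := by
  apply Finset.card_bij (fun k _ => ((e.1.symm k : ↥Y.cells) : ℕ × ℕ))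
  · intro k hk
    simp only [Finset.mem_filter, Finset.mem_univ, true_and] at hk ⊢
    exact ⟨(e.1.symm k).2, hk⟩
  · intro a _ b _ hab
    exact e.1.symm.injective (Subtype.ext hab)
  · intro c hc
    simp only [Finset.mem_filter] at hc
    refine ⟨e.1 ⟨c, hc.1⟩, ?_, by simp⟩
    simp only [Finset.mem_filter, Finset.mem_univ, true_and, Equiv.symm_apply_apply]
    exact hc.2


/-- for partitions `λ ⊢ n` whose Young diagram has fewer than
`p` boxes outside the first `d` rows, `dim M(λ) ≤ C n^r d^n` for constants
`C, r` depending only on `d` and `p`. -/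
theorem stmt18 (d p : ℕ) (hd : 1 ≤ d) :
    ∃ C r : ℝ, 0 < C ∧
      ∀ n : ℕ, 1 ≤ n → ∀ Y : YoungDiagram, Y.card = n →
        (Y.cells.filter fun c => d ≤ c.1).card < p →
        (sytCard Y n : ℝ) ≤ C * (n : ℝ) ^ r * (d : ℝ) ^ n := by
  refine ⟨((2 * (d + p) : ℕ) : ℝ) ^ p, (p : ℝ), by positivity, ?_⟩
  intro n hn Y hYcard hfilter
  -- row function
  set row : SYT Y n → Fin n → ℕ :=
    fun e k => ((e.1.symm k : ↥Y.cells) : ℕ × ℕ).1 with hrowdef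
  have rowlt : ∀ (e : SYT Y n) (k : Fin n), row e k < d + p := by
    intro e k
    exact cell_row_lt hfilter (e.1.symm k).2
  -- the "bad" set
  set S : SYT Y n → Finset (Fin n) :=
    fun e => Finset.univ.filter fun k => d ≤ row e k with hSdef
  have hScard : ∀ e : SYT Y n, (S e).card < p := by
    intro e
    have := S_card (d := d) e
    simpa [hSdef, hrowdef, this] using hfilter
  -- encoding
  set enc : SYT Y n → (Fin n → Fin d) × (Fin p → Option (Fin n × Fin (d + p))) :=
    fun e =>
      (fun k => if hk : row e k < d then ⟨row e k, hk⟩ else ⟨0, hd⟩,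
       fun i => if hi : (i : ℕ) < (S e).card then
          some (((S e).orderIsoOfFin rfl ⟨i, hi⟩ : Fin n),
            ⟨row e (((S e).orderIsoOfFin rfl ⟨i, hi⟩ : Fin n)), rowlt _ _⟩)
        else none) with hencdef
  have step : ∀ a b : SYT Y n, enc a = enc b →
      ∀ k : Fin n, d ≤ row a k → row a k = row b k := by
    intro a b hab k hk
    have hkS : k ∈ S a := by simp [hSdef, hk]
    obtain ⟨i, hi⟩ := ((S a).orderIsoOfFin rfl).surjective ⟨k, hkS⟩
    have hip : (i : ℕ) < p := lt_trans i.2 (hScard a)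
    have h1 : (enc a).2 ⟨i, hip⟩ = some (k, ⟨row a k, rowlt _ _⟩) := by
      simp only [hencdef, dif_pos i.2]
      have : ((S a).orderIsoOfFin rfl ⟨(i : ℕ), i.2⟩ : Fin n) = k := by
        have : ((S a).orderIsoOfFin rfl i : Fin n) = k := congrArg Subtype.val hi
        simpa using this
      simp [this]
    have h2 : (enc b).2 ⟨i, hip⟩ = some (k, ⟨row a k, rowlt _ _⟩) := by
      rw [← congrFun (congrArg Prod.snd hab) ⟨i, hip⟩]; exact h1
    have hib : (i : ℕ) < (S b).card := by
      by_contra hc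
      simp only [hencdef, dif_neg hc] at h2
      exact Option.some_ne_none _ h2.symm
    simp only [hencdef, dif_pos hib] at h2
    obtain ⟨hfst, hsnd⟩ := Prod.mk.injEq .. ▸ Option.some.inj h2
    have := congrArg Fin.val hsnd
    simp only at this
    rw [← this, hfst]
  have encinj : Function.Injective enc := by
    intro e1 e2 h
    apply syt_row_injective Y n
    funext k
    show row e1 k = row e2 k
    by_cases h1 : d ≤ row e1 k
    · exact step e1 e2 h k h1
    · by_cases h2 : d ≤ row e2 k
      · exact (step e2 e1 h.symm k h2).symm
      · push_neg at h1 h2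
        have hg := congrFun (congrArg Prod.fst h) k
        simp only [hencdef, dif_pos h1, dif_pos h2] at hg
        exact congrArg Fin.val hg
  -- counting
  have hcount : sytCard Y n ≤ d ^ n * (n * (d + p) + 1) ^ p := by
    have := Nat.card_le_card_of_injective enc encinj
    rw [sytCard]
    calc Nat.card (SYT Y n) ≤ _ := this
      _ = d ^ n * (n * (d + p) + 1) ^ p := by
        simp [Nat.card_eq_fintype_card, Fintype.card_fun, Nat.mul_comm]
  have hstep2 : (n * (d + p) + 1) ^ p ≤ (2 * (d + p)) ^ p * n ^ p := by
    rw [← Nat.mul_pow]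
    apply Nat.pow_le_pow_left
    nlinarith [hn, hd]
  have hfinal : sytCard Y n ≤ (2 * (d + p)) ^ p * n ^ p * d ^ n := by
    calc sytCard Y n ≤ d ^ n * (n * (d + p) + 1) ^ p := hcount
      _ ≤ d ^ n * ((2 * (d + p)) ^ p * n ^ p) := Nat.mul_le_mul_left _ hstep2
      _ = (2 * (d + p)) ^ p * n ^ p * d ^ n := by ring
  have : ((n : ℝ)) ^ ((p : ℕ) : ℝ) = ((n : ℝ)) ^ (p : ℕ) := Real.rpow_natCast _ _
  rw [this]
  calc (sytCard Y n : ℝ) ≤ (((2 * (d + p)) ^ p * n ^ p * d ^ n : ℕ) : ℝ) := by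
        exact_mod_cast hfinal
    _ = ((2 * (d + p) : ℕ) : ℝ) ^ p * (n : ℝ) ^ p * (d : ℝ) ^ n := by push_cast; ring
end
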